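/- arXiv:1505.02627 — 4 statements merged into one kernel-verified Lean document; each statement's English description precedes it below -/
import Mathlib

section
/- There exist constants C₁ > 0 and C₂ > 0 (depending only on μ) such that for all sufficiently large n and every integer j with m₁ ≤ j ≤ m₂: C₁ n^{−2β} ρ^{2/(μ+1)} l_*^{(μ−1)/(μ+1)} ≤ Δλ_j ≤ C₂ n^{−2β} ρ^{2/(μ+1)} (l^*)^{(μ−1)/(μ+1)}. -/
/-- λ₀ = ρ √n · 2√μ/(μ+1). -/
noncomputable def lam0 (μ ρ : ℝ) (n : ℕ) : ℝ :=
  ρ * Real.sqrt n * (2 * Real.sqrt μ / (μ + 1))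

/-- Trading times t_j = 1 − (1 − j/n)^μ. -/
noncomputable def tradeT (μ : ℝ) (n j : ℕ) : ℝ :=
  1 - (1 - (j : ℝ) / n) ^ μ

/-- λ_j = λ₀ (1 − j/n)^{(μ+1)/2}. -/
noncomputable def lamJ (μ ρ : ℝ) (n j : ℕ) : ℝ :=
  lam0 μ ρ n * (1 - (j : ℝ) / n) ^ ((μ + 1) / 2)

/-- Δλ_j = λ_{j−1} − λ_j. -/
noncomputable def dLam (μ ρ : ℝ) (n j : ℕ) : ℝ :=
  lamJ μ ρ n (j - 1) - lamJ μ ρ n j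

/-- Δt_j = t_j − t_{j−1}. -/
noncomputable def dT (μ : ℝ) (n j : ℕ) : ℝ :=
  tradeT μ n j - tradeT μ n (j - 1)

/-- l_* = (log n)^{−3}. -/
noncomputable def lStar (n : ℕ) : ℝ := ((Real.log n) ^ (3 : ℕ))⁻¹

/-- l^* = (log n)^3. -/
noncomputable def lUpStar (n : ℕ) : ℝ := (Real.log n) ^ (3 : ℕ)

/-- m₁ = n − ⌊n (l^*/λ₀)^{2/(μ+1)}⌋. -/
noncomputable def mLow (μ ρ : ℝ) (n : ℕ) : ℕ :=
  n - ⌊(n : ℝ) * (lUpStar n / lam0 μ ρ n) ^ ((2 : ℝ) / (μ + 1))⌋₊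

/-- m₂ = n − ⌊n (l_*/λ₀)^{2/(μ+1)}⌋. -/
noncomputable def mUp (μ ρ : ℝ) (n : ℕ) : ℕ :=
  n - ⌊(n : ℝ) * (lStar n / lam0 μ ρ n) ^ ((2 : ℝ) / (μ + 1))⌋₊

/-- Bernoulli-type lower bound: for `α ≥ 1`, `x > 0`, `h ≥ 0`,
`x^α + α x^{α-1} h ≤ (x+h)^α`. -/
lemma bern_low {α x h : ℝ} (hα : 1 ≤ α) (hx : 0 < x) (hh : 0 ≤ h) :
    x ^ α + α * x ^ (α - 1) * h ≤ (x + h) ^ α := by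
  have hdx : (0:ℝ) ≤ h / x := div_nonneg hh hx.le
  have hs : (-1:ℝ) ≤ h / x := by linarith
  have hb := one_add_mul_self_le_rpow_one_add hs hα
  have hxα : (0:ℝ) < x ^ α := Real.rpow_pos_of_pos hx _
  have h1 : x ^ α * (1 + α * (h / x)) ≤ x ^ α * (1 + h / x) ^ α :=
    mul_le_mul_of_nonneg_left hb hxα.le
  have h2 : x ^ α * (1 + h / x) ^ α = (x + h) ^ α := by
    rw [← Real.mul_rpow hx.le (by linarith)]
    congr 1; field_simp
  have h3 : x ^ α * (1 + α * (h / x)) = x ^ α + α * x ^ (α - 1) * h := by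
    rw [Real.rpow_sub hx, Real.rpow_one]; field_simp
  rw [h2, h3] at h1; exact h1

/-- Bernoulli-type upper bound: for `α ≥ 1`, `x ≥ 0`, `h > 0`,
`(x+h)^α ≤ x^α + α (x+h)^{α-1} h`. -/
lemma bern_up {α x h : ℝ} (hα : 1 ≤ α) (hx : 0 ≤ x) (hh : 0 < h) :
    (x + h) ^ α ≤ x ^ α + α * (x + h) ^ (α - 1) * h := by
  set y := x + h with hy
  have hy0 : 0 < y := by positivity
  have hd1 : h / y ≤ 1 := by rw [div_le_one hy0]; linarith
  have hs : (-1:ℝ) ≤ -(h / y) := by linarith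
  have hb := one_add_mul_self_le_rpow_one_add hs hα
  have hyα : (0:ℝ) < y ^ α := Real.rpow_pos_of_pos hy0 _
  have h1 : y ^ α * (1 + α * -(h / y)) ≤ y ^ α * (1 + -(h / y)) ^ α :=
    mul_le_mul_of_nonneg_left hb hyα.le
  have h2 : y ^ α * (1 + -(h / y)) ^ α = x ^ α := by
    rw [← Real.mul_rpow hy0.le (by linarith)]
    congr 1; field_simp; rw [hy]; ring
  have h3 : y ^ α * (1 + α * -(h / y)) = y ^ α - α * y ^ (α - 1) * h := by
    rw [Real.rpow_sub hy0, Real.rpow_one]; field_simp; ring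
  rw [h2, h3] at h1; linarith

/-- Eventually `(log n)^3 ≤ c √n`. -/
lemma log_cube_ev {c : ℝ} (hc : 0 < c) :
    ∀ᶠ n : ℕ in Filter.atTop, (Real.log n) ^ (3 : ℕ) ≤ c * Real.sqrt n := by
  have h := (isLittleO_log_rpow_rpow_atTop (3:ℝ) (one_half_pos)).def hc
  have hE : ∀ᶠ x : ℝ in Filter.atTop, (Real.log x) ^ (3 : ℕ) ≤ c * Real.sqrt x := by
    filter_upwards [h, Filter.eventually_ge_atTop (1:ℝ)] with x hx hx1
    have hx0 : (0:ℝ) ≤ x := by linarith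
    have hl : 0 ≤ Real.log x := Real.log_nonneg hx1
    have e1 : Real.log x ^ (3:ℝ) = Real.log x ^ (3:ℕ) := by
      rw [show (3:ℝ) = ((3:ℕ):ℝ) by norm_num, Real.rpow_natCast]
    rw [Real.norm_eq_abs, Real.norm_eq_abs, abs_of_nonneg (Real.rpow_nonneg hl _),
      abs_of_nonneg (Real.rpow_nonneg hx0 _), e1, ← Real.sqrt_eq_rpow] at hx
    exact hx
  exact tendsto_natCast_atTop_atTop.eventually hE

lemma le_three_of_sq_eq_eight {x : ℝ} (hx : 0 ≤ x) (h : x ^ (2:ℕ) = 8) : x ≤ 3 := by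
  nlinarith

/- STATEMENT 2: There exist C₁, C₂ > 0 (depending only on μ) such that for all
   sufficiently large n and every j with m₁ ≤ j ≤ m₂:
   C₁ n^{−2β} ρ^{2/(μ+1)} l_*^{(μ−1)/(μ+1)} ≤ Δλ_j ≤ C₂ n^{−2β} ρ^{2/(μ+1)} (l^*)^{(μ−1)/(μ+1)},
   where β = μ/(2(μ+1)). -/
set_option maxHeartbeats 1000000 in
theorem dLam_bounds (μ ρ : ℝ) (hμ1 : 1 ≤ μ) (hμ2 : μ < 2) (hρ : 0 < ρ) :
    ∃ C₁ C₂ : ℝ, 0 < C₁ ∧ 0 < C₂ ∧ ∃ N : ℕ, ∀ n : ℕ, N ≤ n → ∀ j : ℕ,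
      mLow μ ρ n ≤ j → j ≤ mUp μ ρ n →
        C₁ * (n : ℝ) ^ (-(2 * (μ / (2 * (μ + 1))))) * ρ ^ ((2 : ℝ) / (μ + 1))
            * lStar n ^ ((μ - 1) / (μ + 1)) ≤ dLam μ ρ n j
        ∧ dLam μ ρ n j ≤ C₂ * (n : ℝ) ^ (-(2 * (μ / (2 * (μ + 1)))))
            * ρ ^ ((2 : ℝ) / (μ + 1)) * lUpStar n ^ ((μ - 1) / (μ + 1)) := by
  have hμ0 : (0:ℝ) < μ := by linarith
  have hμp1 : (0:ℝ) < μ + 1 := by linarith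
  have hne : μ + 1 ≠ 0 := hμp1.ne'
  have hsμ : 0 < Real.sqrt μ := Real.sqrt_pos.mpr hμ0
  set a : ℝ := 2 * Real.sqrt μ / (μ + 1) with ha_def
  have ha : 0 < a := by positivity
  set q : ℝ := (2:ℝ) / (μ + 1) with hq_def
  set r : ℝ := (μ - 1) / (μ + 1) with hr_def
  set α : ℝ := (μ + 1) / 2 with hα_def
  have hq0 : 0 < q := by rw [hq_def]; positivity
  have hr0 : 0 ≤ r := div_nonneg (by linarith) hμp1.le
  have hα1 : 1 ≤ α := by rw [hα_def]; linarith
  have hα32 : α ≤ 3/2 := by rw [hα_def]; linarith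
  have hαq : α * q = 1 := by rw [hα_def, hq_def]; field_simp
  have hqα1 : q * (α - 1) = r := by rw [hq_def, hα_def, hr_def]; field_simp; ring
  have h1r : (1:ℝ) - r = q := by rw [hq_def, hr_def]; field_simp; ring
  refine ⟨1/2 * a ^ q, 3 * a ^ q, by positivity, by positivity, ?_⟩
  have hεpos : 0 < min (ρ * a / 2) (1 / (3 * (ρ * a))) := lt_min (by positivity) (by positivity)
  obtain ⟨N, hN⟩ := Filter.eventually_atTop.mp
    ((log_cube_ev hεpos).and (Filter.eventually_ge_atTop 3))
  refine ⟨N, ?_⟩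
  intro n hn j hj1 hj2
  obtain ⟨hlog, hn3⟩ := hN n hn
  have hn1 : (1:ℝ) ≤ (n:ℝ) := by exact_mod_cast le_trans (by norm_num) hn3
  have hn0 : (0:ℝ) < n := lt_of_lt_of_le one_pos hn1
  have hsq : 0 < Real.sqrt n := Real.sqrt_pos.mpr hn0
  have hlogn : 1 ≤ Real.log n := by
    rw [Real.le_log_iff_exp_le hn0]
    have h3 : (3:ℝ) ≤ (n:ℝ) := by exact_mod_cast hn3
    have := Real.exp_one_lt_d9
    linarith
  have hL : 0 < (Real.log n) ^ (3:ℕ) := by positivity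
  have hL1 : 1 ≤ (Real.log n) ^ (3:ℕ) := by
    have := pow_le_pow_left₀ (by norm_num : (0:ℝ) ≤ 1) hlogn 3
    simpa using this
  have hls : 0 < lStar n := by rw [lStar]; positivity
  have hlu : 0 < lUpStar n := hL
  have hlsu : lStar n ≤ lUpStar n := by
    rw [lStar, lUpStar]
    calc ((Real.log n) ^ (3:ℕ))⁻¹ ≤ 1 := by
          exact inv_le_one_of_one_le₀ hL1
    _ ≤ (Real.log n) ^ (3:ℕ) := hL1
  have hlam : lam0 μ ρ n = ρ * Real.sqrt n * a := rfl
  have hlam0 : 0 < lam0 μ ρ n := by rw [hlam]; positivity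
  -- consequences of the log bound
  have hlogB : lUpStar n < ρ * a * Real.sqrt n := by
    have h1 : (Real.log n) ^ (3:ℕ) ≤ ρ * a / 2 * Real.sqrt n :=
      le_trans hlog (mul_le_mul_of_nonneg_right (min_le_left _ _) hsq.le)
    have h2 : 0 < ρ * a * Real.sqrt n := by positivity
    rw [lUpStar]; linarith
  have hlogC : 3 * (ρ * a) * (Real.log n) ^ (3:ℕ) ≤ Real.sqrt n := by
    have h1 : (Real.log n) ^ (3:ℕ) ≤ 1 / (3 * (ρ * a)) * Real.sqrt n :=
      le_trans hlog (mul_le_mul_of_nonneg_right (min_le_right _ _) hsq.le)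
    have h2 : (0:ℝ) < 3 * (ρ * a) := by positivity
    calc 3 * (ρ * a) * (Real.log n) ^ (3:ℕ)
        ≤ 3 * (ρ * a) * (1 / (3 * (ρ * a)) * Real.sqrt n) :=
          mul_le_mul_of_nonneg_left h1 h2.le
    _ = Real.sqrt n := by field_simp
  -- key quantities
  set z1 : ℝ := lStar n / lam0 μ ρ n with hz1
  set z2 : ℝ := lUpStar n / lam0 μ ρ n with hz2
  have hz1p : 0 < z1 := div_pos hls hlam0
  have hz2p : 0 < z2 := div_pos hlu hlam0
  have hz12 : z1 ≤ z2 := by rw [hz1, hz2]; exact (div_le_div_iff_of_pos_right hlam0).mpr hlsu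
  set A1 : ℝ := z1 ^ q with hA1
  set A2 : ℝ := z2 ^ q with hA2
  have hA1p : 0 < A1 := Real.rpow_pos_of_pos hz1p _
  have hA2p : 0 < A2 := Real.rpow_pos_of_pos hz2p _
  have hA12 : A1 ≤ A2 := Real.rpow_le_rpow hz1p.le hz12 hq0.le
  have hz2lt1 : z2 < 1 := by
    rw [hz2, div_lt_one hlam0, hlam]
    calc lUpStar n < ρ * a * Real.sqrt n := hlogB
    _ = ρ * Real.sqrt n * a := by ring
  have hA2lt1 : A2 < 1 := Real.rpow_lt_one hz2p.le hz2lt1 hq0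
  have hsqe : Real.sqrt n = (n:ℝ) ^ ((1:ℝ)/2) := Real.sqrt_eq_rpow n
  -- 2 ≤ n * A1
  have hnA1 : 2 ≤ (n:ℝ) * A1 := by
    have key : (2 / (n:ℝ)) ^ α ≤ z1 := by
      have hnα : 0 < (n:ℝ) ^ α := Real.rpow_pos_of_pos hn0 _
      have hstep1 : (2 / (n:ℝ)) ^ α ≤ 3 / (n:ℝ) ^ α := by
        rw [Real.div_rpow (by norm_num) hn0.le]
        have h2a : (2:ℝ) ^ α ≤ 3 := by
          have e1 : ((2:ℝ) ^ ((3:ℝ)/2)) ^ (2:ℕ) = 8 := by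
            rw [← Real.rpow_natCast ((2:ℝ) ^ ((3:ℝ)/2)) 2, ← Real.rpow_mul (by norm_num)]
            norm_num
          have e2 : (2:ℝ) ^ α ≤ (2:ℝ) ^ ((3:ℝ)/2) :=
            Real.rpow_le_rpow_of_exponent_le one_le_two hα32
          have e3 : (2:ℝ) ^ ((3:ℝ)/2) ≤ 3 :=
            le_three_of_sq_eq_eight (Real.rpow_nonneg (by norm_num) _) e1
          linarith
        exact (div_le_div_iff_of_pos_right hnα).mpr h2a
      have hstep2 : 3 / (n:ℝ) ^ α ≤ z1 := by
        have e3 : (n:ℝ) ^ ((1:ℝ)/2) ≤ (n:ℝ) ^ (α - 1/2) :=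
          Real.rpow_le_rpow_of_exponent_le hn1 (by rw [hα_def]; linarith)
        have f1 : 3 * (ρ * a) * (Real.log n) ^ (3:ℕ) ≤ (n:ℝ) ^ (α - 1/2) := by
          calc 3 * (ρ * a) * (Real.log n) ^ (3:ℕ) ≤ Real.sqrt n := hlogC
          _ = (n:ℝ) ^ ((1:ℝ)/2) := hsqe
          _ ≤ (n:ℝ) ^ (α - 1/2) := e3
        have hz1eq : z1 = 1 / ((Real.log n) ^ (3:ℕ) * (ρ * Real.sqrt n * a)) := by
          rw [hz1, lStar, hlam]
          field_simp
        rw [hz1eq, div_le_div_iff₀ hnα (by positivity)]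
        calc 3 * ((Real.log n) ^ (3:ℕ) * (ρ * Real.sqrt n * a))
            = (3 * (ρ * a) * (Real.log n) ^ (3:ℕ)) * Real.sqrt n := by ring
        _ ≤ (n:ℝ) ^ (α - 1/2) * Real.sqrt n :=
            mul_le_mul_of_nonneg_right f1 hsq.le
        _ = (n:ℝ) ^ α := by
            rw [hsqe, ← Real.rpow_add hn0]; ring_nf
        _ = 1 * (n:ℝ) ^ α := by ring
      exact le_trans hstep1 hstep2
    have h2n : (2 / (n:ℝ)) ≤ A1 := by
      calc (2 / (n:ℝ)) = ((2 / (n:ℝ)) ^ α) ^ q := by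
            rw [← Real.rpow_mul (by positivity), hαq, Real.rpow_one]
      _ ≤ z1 ^ q := Real.rpow_le_rpow (Real.rpow_nonneg (by positivity) _) key hq0.le
    rw [div_le_iff₀ hn0] at h2n; linarith
  -- floors and index bounds
  set k1 : ℕ := ⌊(n:ℝ) * A1⌋₊ with hk1
  set k2 : ℕ := ⌊(n:ℝ) * A2⌋₊ with hk2
  have hmU : mUp μ ρ n = n - k1 := by
    rw [mUp, ← hq_def, ← hz1, ← hA1, ← hk1]
  have hmL : mLow μ ρ n = n - k2 := by
    rw [mLow, ← hq_def, ← hz2, ← hA2, ← hk2]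
  rw [hmL] at hj1; rw [hmU] at hj2
  have hk2n : k2 < n := by
    rw [hk2, Nat.floor_lt (by positivity)]
    calc (n:ℝ) * A2 < (n:ℝ) * 1 := mul_lt_mul_of_pos_left hA2lt1 hn0
    _ = (n:ℝ) := by ring
  have hk12 : k1 ≤ k2 := Nat.floor_le_floor (mul_le_mul_of_nonneg_left hA12 hn0.le)
  have hjn : j ≤ n := le_trans hj2 (Nat.sub_le n k1)
  have hj1' : 1 ≤ j := by omega
  have hnj1 : k1 ≤ n - j := by omega
  have hnj2 : n - j ≤ k2 := by omega
  have hxk : ((n - j : ℕ):ℝ) = (n:ℝ) - j := by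
    rw [Nat.cast_sub hjn]
  -- x and δ
  set x : ℝ := 1 - (j:ℝ)/n with hxdef
  set δ : ℝ := 1/(n:ℝ) with hδdef
  have hδ : 0 < δ := by rw [hδdef]; positivity
  have hxeq : x = ((n:ℝ) - j)/n := by rw [hxdef]; field_simp
  have hxup : x ≤ A2 := by
    rw [hxeq, div_le_iff₀ hn0]
    have f1 : (k2:ℝ) ≤ (n:ℝ) * A2 := Nat.floor_le (by positivity)
    have f2 : ((n - j : ℕ):ℝ) ≤ (k2:ℝ) := Nat.cast_le.mpr hnj2
    rw [hxk] at f2; linarith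
  have hxlow : A1/2 ≤ x := by
    have f1 : (n:ℝ) * A1 - 1 < (k1:ℝ) := Nat.sub_one_lt_floor _
    have f2 : (k1:ℝ) ≤ ((n - j : ℕ):ℝ) := Nat.cast_le.mpr hnj1
    rw [hxk] at f2
    rw [hxeq, le_div_iff₀ hn0]
    linarith
  have hx0 : 0 < x := lt_of_lt_of_le (by positivity) hxlow
  -- dLam formula
  have hjcast : ((j - 1 : ℕ):ℝ) = (j:ℝ) - 1 := by
    rw [Nat.cast_sub hj1']; norm_num
  have hbase : 1 - ((j:ℝ) - 1)/n = x + δ := by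
    rw [hxdef, hδdef]; field_simp; ring
  have hdl : dLam μ ρ n j = lam0 μ ρ n * ((x + δ) ^ α - x ^ α) := by
    rw [dLam, lamJ, lamJ, hjcast, hbase, ← hα_def, ← hxdef]; ring
  -- shared rpow computations
  have hlamr : 0 < lam0 μ ρ n ^ r := Real.rpow_pos_of_pos hlam0 _
  have hlamq : lam0 μ ρ n / lam0 μ ρ n ^ r = lam0 μ ρ n ^ q := by
    rw [← h1r, Real.rpow_sub hlam0, Real.rpow_one]
  have hlamqe : lam0 μ ρ n ^ q = ρ ^ q * (n:ℝ) ^ (q/2) * a ^ q := by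
    rw [hlam, Real.mul_rpow (by positivity) ha.le, Real.mul_rpow hρ.le (Real.sqrt_nonneg _)]
    have e : Real.sqrt n ^ q = (n:ℝ) ^ (q/2) := by
      rw [hsqe, ← Real.rpow_mul hn0.le]; ring_nf
    rw [e]
  have hexp : -(2 * (μ / (2 * (μ + 1)))) = q/2 - 1 := by
    rw [hq_def]; field_simp; ring
  have hnq : (n:ℝ) ^ (q/2 - 1) = (n:ℝ) ^ (q/2) / n := by
    rw [Real.rpow_sub hn0, Real.rpow_one]
  have hA1r : A1 ^ (α - 1) = lStar n ^ r / lam0 μ ρ n ^ r := by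
    rw [hA1, ← Real.rpow_mul hz1p.le, hqα1, hz1, Real.div_rpow hls.le hlam0.le]
  have hA2r : A2 ^ (α - 1) = lUpStar n ^ r / lam0 μ ρ n ^ r := by
    rw [hA2, ← Real.rpow_mul hz2p.le, hqα1, hz2, Real.div_rpow hlu.le hlam0.le]
  have h2α : (2:ℝ) ^ (α - 1) ≤ 2 := by
    calc (2:ℝ) ^ (α - 1) ≤ (2:ℝ) ^ (1:ℝ) :=
      Real.rpow_le_rpow_of_exponent_le one_le_two (by linarith)
    _ = 2 := Real.rpow_one 2
  have h2αp : (0:ℝ) < (2:ℝ) ^ (α - 1) := Real.rpow_pos_of_pos two_pos _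
  constructor
  · -- lower bound
    have low1 : lam0 μ ρ n * (α * x ^ (α - 1) * δ) ≤ dLam μ ρ n j := by
      rw [hdl]
      apply mul_le_mul_of_nonneg_left _ hlam0.le
      linarith [bern_low hα1 hx0 hδ.le]
    have low2 : (A1/2) ^ (α - 1) ≤ x ^ (α - 1) :=
      Real.rpow_le_rpow (by positivity) hxlow (by linarith)
    have low3 : A1 ^ (α - 1) / 2 ≤ (A1/2) ^ (α - 1) := by
      rw [Real.div_rpow hA1p.le (by norm_num)]
      rcases eq_or_lt_of_le (Real.rpow_nonneg hA1p.le (α - 1)) with he | hpos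
      · rw [← he]; simp
      · exact (div_le_div_iff_of_pos_left hpos two_pos h2αp).mpr h2α
    have low4 : A1 ^ (α - 1) / 2 * δ ≤ α * x ^ (α - 1) * δ := by
      have hx1 : A1 ^ (α - 1) / 2 ≤ x ^ (α - 1) := le_trans low3 low2
      have hxr0 : 0 ≤ x ^ (α - 1) := Real.rpow_nonneg hx0.le _
      calc A1 ^ (α - 1) / 2 * δ ≤ x ^ (α - 1) * δ :=
            mul_le_mul_of_nonneg_right hx1 hδ.le
      _ = 1 * (x ^ (α - 1) * δ) := by ring
      _ ≤ α * (x ^ (α - 1) * δ) :=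
            mul_le_mul_of_nonneg_right hα1 (by positivity)
      _ = α * x ^ (α - 1) * δ := by ring
    have low5 : lam0 μ ρ n * (A1 ^ (α - 1) / 2 * δ) ≤ dLam μ ρ n j :=
      le_trans (mul_le_mul_of_nonneg_left low4 hlam0.le) low1
    have keyeq : lam0 μ ρ n * (A1 ^ (α - 1) / 2 * δ)
        = 1/2 * a ^ q * ((n:ℝ) ^ (q/2) / n) * ρ ^ q * lStar n ^ r := by
      rw [hA1r, hδdef,
        show lam0 μ ρ n * (lStar n ^ r / lam0 μ ρ n ^ r / 2 * (1/(n:ℝ)))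
          = lam0 μ ρ n / lam0 μ ρ n ^ r * lStar n ^ r / (2 * n) from by ring,
        hlamq, hlamqe]
      ring
    calc 1/2 * a ^ q * (n:ℝ) ^ (-(2 * (μ / (2 * (μ + 1))))) * ρ ^ q * lStar n ^ r
        = lam0 μ ρ n * (A1 ^ (α - 1) / 2 * δ) := by rw [hexp, hnq, keyeq]
    _ ≤ dLam μ ρ n j := low5
  · -- upper bound
    have up1 : dLam μ ρ n j ≤ lam0 μ ρ n * (α * (x + δ) ^ (α - 1) * δ) := by
      rw [hdl]
      apply mul_le_mul_of_nonneg_left _ hlam0.le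
      linarith [bern_up hα1 hx0.le hδ]
    have hδA2 : δ ≤ A2 := by
      rw [hδdef, div_le_iff₀ hn0]
      have := mul_le_mul_of_nonneg_left hA12 hn0.le
      linarith
    have hxδ : x + δ ≤ 2 * A2 := by linarith
    have up2 : (x + δ) ^ (α - 1) ≤ (2 * A2) ^ (α - 1) :=
      Real.rpow_le_rpow (by positivity) hxδ (by linarith)
    have up3 : (2 * A2) ^ (α - 1) ≤ 2 * A2 ^ (α - 1) := by
      rw [Real.mul_rpow (by norm_num) hA2p.le]
      exact mul_le_mul_of_nonneg_right h2α (Real.rpow_nonneg hA2p.le _)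
    have up4 : α * (x + δ) ^ (α - 1) * δ ≤ 3 * A2 ^ (α - 1) * δ := by
      have h1 : (x + δ) ^ (α - 1) ≤ 2 * A2 ^ (α - 1) := le_trans up2 up3
      have h2 : 0 ≤ (x + δ) ^ (α - 1) := Real.rpow_nonneg (by positivity) _
      calc α * (x + δ) ^ (α - 1) * δ = α * ((x + δ) ^ (α - 1) * δ) := by ring
      _ ≤ (3/2) * ((x + δ) ^ (α - 1) * δ) :=
            mul_le_mul_of_nonneg_right hα32 (by positivity)
      _ ≤ (3/2) * (2 * A2 ^ (α - 1) * δ) := by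
            apply mul_le_mul_of_nonneg_left _ (by norm_num)
            exact mul_le_mul_of_nonneg_right h1 hδ.le
      _ = 3 * A2 ^ (α - 1) * δ := by ring
    have up5 : dLam μ ρ n j ≤ lam0 μ ρ n * (3 * A2 ^ (α - 1) * δ) :=
      le_trans up1 (mul_le_mul_of_nonneg_left up4 hlam0.le)
    have keyeq : lam0 μ ρ n * (3 * A2 ^ (α - 1) * δ)
        = 3 * a ^ q * ((n:ℝ) ^ (q/2) / n) * ρ ^ q * lUpStar n ^ r := by
      rw [hA2r, hδdef,
        show lam0 μ ρ n * (3 * (lUpStar n ^ r / lam0 μ ρ n ^ r) * (1/(n:ℝ)))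
          = lam0 μ ρ n / lam0 μ ρ n ^ r * lUpStar n ^ r * 3 / n from by ring,
        hlamq, hlamqe]
      ring
    calc dLam μ ρ n j ≤ lam0 μ ρ n * (3 * A2 ^ (α - 1) * δ) := up5
    _ = 3 * a ^ q * (n:ℝ) ^ (-(2 * (μ / (2 * (μ + 1))))) * ρ ^ q * lUpStar n ^ r := by
        rw [hexp, hnq, keyeq]
end

section
/- The ratio Δλ_j / √(Δt_j) converges to ρ uniformly over the trading range: lim_{n→∞} sup_{m₁ ≤ j ≤ m₂} | Δλ_j (Δt_j)^{−1/2} − ρ | = 0. -/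
open Filter Real Topology

noncomputable def Sq (q x : ℝ) : ℝ := ((1+x)^q - 1)/x

lemma tendsto_Sq (q : ℝ) : Tendsto (Sq q) (𝓝[>] (0:ℝ)) (𝓝 q) := by
  have h := Real.hasDerivAt_rpow_const (x := (1:ℝ)) (p := q) (Or.inl one_ne_zero)
  rw [hasDerivAt_iff_tendsto_slope] at h
  have h2 : Tendsto (fun x : ℝ => 1 + x) (𝓝[>](0:ℝ)) (𝓝[≠](1:ℝ)) := by
    apply tendsto_nhdsWithin_of_tendsto_nhds_of_eventually_within
    · have : Tendsto (fun x : ℝ => 1 + x) (𝓝 (0:ℝ)) (𝓝 (1:ℝ)) := by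
        simpa using (continuous_add_left (1:ℝ)).tendsto (0:ℝ)
      exact this.mono_left nhdsWithin_le_nhds
    · filter_upwards [self_mem_nhdsWithin] with x hx
      have : (0:ℝ) < x := hx
      exact ne_of_gt (by linarith)
  have h3 := (h.comp h2)
  have he : q * (1:ℝ) ^ (q - 1) = q := by simp [Real.one_rpow]
  rw [he] at h3
  refine h3.congr (fun x => ?_)
  simp [slope, Sq, Real.one_rpow, div_eq_inv_mul]

lemma ratio_tendsto (μ ρ : ℝ) (hμ1 : 1 ≤ μ) (hρ : 0 < ρ) :
    Tendsto (fun k : ℕ => ρ * (2*Real.sqrt μ/(μ+1)) *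
      (Sq ((μ+1)/2) (1/(k:ℝ)) / Real.sqrt (Sq μ (1/(k:ℝ))))) atTop (𝓝 ρ) := by
  have hμ0 : (0:ℝ) < μ := lt_of_lt_of_le one_pos hμ1
  have hsμ : (0:ℝ) < Real.sqrt μ := Real.sqrt_pos.mpr hμ0
  have hx : Tendsto (fun k : ℕ => 1/(k:ℝ)) atTop (𝓝[>](0:ℝ)) := by
    apply tendsto_nhdsWithin_of_tendsto_nhds_of_eventually_within
    · exact tendsto_one_div_atTop_nhds_zero_nat
    · filter_upwards [eventually_ge_atTop 1] with k hk
      have : (0:ℝ) < (k:ℝ) := by exact_mod_cast hk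
      exact one_div_pos.mpr this
  have h1 := (tendsto_Sq ((μ+1)/2)).comp hx
  have h2 := (Real.continuous_sqrt.tendsto μ).comp ((tendsto_Sq μ).comp hx)
  have h3 := h1.div h2 (ne_of_gt hsμ)
  have h4 := h3.const_mul (ρ * (2*Real.sqrt μ/(μ+1)))
  have he : ρ * (2*Real.sqrt μ/(μ+1)) * ((μ+1)/2 / Real.sqrt μ) = ρ := by
    field_simp
  rw [he] at h4
  exact h4.congr (fun k => rfl)


lemma key_eq (μ ρ : ℝ) (hμ0 : 0 < μ) (hρ : 0 < ρ) (n j : ℕ) (hj1 : 1 ≤ j) (hjn : j < n) :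
    dLam μ ρ n j * (Real.sqrt (dT μ n j))⁻¹
      = ρ * (2*Real.sqrt μ/(μ+1)) *
        (Sq ((μ+1)/2) (1/((n-j : ℕ):ℝ)) / Real.sqrt (Sq μ (1/((n-j : ℕ):ℝ)))) := by
  set k : ℕ := n - j with hk
  have hk1 : 1 ≤ k := by omega
  have hkR : (0:ℝ) < (k:ℝ) := by exact_mod_cast hk1
  have hnR : (0:ℝ) < (n:ℝ) := by exact_mod_cast (show 0 < n by omega)
  have hcast : (k:ℝ) = (n:ℝ) - (j:ℝ) := by
    rw [hk]; push_cast [Nat.cast_sub (le_of_lt hjn)]; ring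
  have hjcast : ((j-1:ℕ):ℝ) = (j:ℝ) - 1 := by push_cast [Nat.cast_sub hj1]; ring
  set x : ℝ := 1/((k:ℕ):ℝ) with hxdef
  have hx : (0:ℝ) < x := one_div_pos.mpr hkR
  set a : ℝ := (k:ℝ)/n with hadef
  have ha : (0:ℝ) < a := div_pos hkR hnR
  have e1 : 1 - (j:ℝ)/n = a := by
    rw [hadef, hcast]; field_simp
  have e2 : 1 - ((j-1:ℕ):ℝ)/n = a * (1+x) := by
    rw [hjcast, hadef, hxdef]
    field_simp
    linear_combination (-1:ℝ) * hcast
  have h1x : (0:ℝ) < 1 + x := by linarith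
  set p : ℝ := (μ+1)/2 with hpdef
  have hp : (0:ℝ) < p := by rw [hpdef]; linarith
  have hmulp : (a*(1+x))^p = a^p * (1+x)^p := Real.mul_rpow ha.le h1x.le
  have hmulm : (a*(1+x))^μ = a^μ * (1+x)^μ := Real.mul_rpow ha.le h1x.le
  have hSqx : ∀ q : ℝ, (1+x)^q - 1 = x * Sq q x := by
    intro q; rw [Sq]; field_simp
  have hone_lt : ∀ q : ℝ, 0 < q → 1 < (1+x)^q := by
    intro q hq
    rw [Real.one_lt_rpow_iff_of_pos h1x]
    exact Or.inl ⟨by linarith, hq⟩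
  have hSqp : (0:ℝ) < Sq p x := by
    have := hone_lt p hp
    have h2 := hSqx p
    nlinarith
  have hSqm : (0:ℝ) < Sq μ x := by
    have := hone_lt μ hμ0
    have h2 := hSqx μ
    nlinarith
  have hdLam : dLam μ ρ n j = lam0 μ ρ n * a^p * (x * Sq p x) := by
    rw [dLam, lamJ, lamJ, e1, e2, hmulp, ← hSqx p]; ring
  have hdT : dT μ n j = a^μ * (x * Sq μ x) := by
    rw [dT, tradeT, tradeT, e1, e2, hmulm, ← hSqx μ]; ring
  have hdTpos : (0:ℝ) < dT μ n j := by
    rw [hdT]; positivity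
  have hlam0 : (0:ℝ) < lam0 μ ρ n := by
    rw [lam0]
    have : (0:ℝ) < Real.sqrt μ := Real.sqrt_pos.mpr hμ0
    have : (0:ℝ) < Real.sqrt n := Real.sqrt_pos.mpr hnR
    positivity
  have hLHS0 : 0 ≤ dLam μ ρ n j * (Real.sqrt (dT μ n j))⁻¹ := by
    rw [hdLam]
    exact mul_nonneg (mul_nonneg (mul_nonneg hlam0.le (Real.rpow_nonneg ha.le _))
      (mul_nonneg hx.le hSqp.le)) (inv_nonneg.mpr (Real.sqrt_nonneg _))
  have hsμ : (0:ℝ) < Real.sqrt μ := Real.sqrt_pos.mpr hμ0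
  have hRHS0 : 0 ≤ ρ * (2*Real.sqrt μ/(μ+1)) * (Sq p x / Real.sqrt (Sq μ x)) := by
    have h1 : (0:ℝ) ≤ 2*Real.sqrt μ/(μ+1) := by positivity
    exact mul_nonneg (mul_nonneg hρ.le h1) (div_nonneg hSqp.le (Real.sqrt_nonneg _))
  -- squares agree
  have hsq : (dLam μ ρ n j * (Real.sqrt (dT μ n j))⁻¹)^2
      = (ρ * (2*Real.sqrt μ/(μ+1)) * (Sq p x / Real.sqrt (Sq μ x)))^2 := by
    have hsdT : Real.sqrt (dT μ n j) ^ 2 = dT μ n j := Real.sq_sqrt hdTpos.le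
    have hsSq : Real.sqrt (Sq μ x) ^ 2 = Sq μ x := Real.sq_sqrt hSqm.le
    have hA2 : (a^p)^2 = a^μ * a := by
      rw [← Real.rpow_natCast (a^p) 2, ← Real.rpow_mul ha.le]
      have : p * (2:ℕ) = μ + 1 := by rw [hpdef]; push_cast; ring
      rw [this, Real.rpow_add ha, Real.rpow_one]
    have hL2 : (lam0 μ ρ n)^2 = ρ^2 * n * (2*Real.sqrt μ/(μ+1))^2 := by
      rw [lam0, mul_pow, mul_pow, Real.sq_sqrt hnR.le]
    have hax : a * x * (n:ℝ) = 1 := by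
      rw [hadef, hxdef]; field_simp
    have hML : (dLam μ ρ n j * (Real.sqrt (dT μ n j))⁻¹)^2
        = (lam0 μ ρ n * a^p * (x * Sq p x))^2 * (a^μ * (x * Sq μ x))⁻¹ := by
      rw [mul_pow, inv_pow, hsdT, hdLam, hdT]
    have hMR : (ρ * (2*Real.sqrt μ/(μ+1)) * (Sq p x / Real.sqrt (Sq μ x)))^2
        = (ρ * (2*Real.sqrt μ/(μ+1)))^2 * (Sq p x)^2 / Sq μ x := by
      rw [mul_pow, div_pow, hsSq]; ring
    rw [hML, hMR]
    have haμ : a^μ ≠ 0 := ne_of_gt (Real.rpow_pos_of_pos ha μ)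
    field_simp
    have hL2' : (lam0 μ ρ n)^2 * (μ+1)^2 = ρ^2 * n * (2*Real.sqrt μ)^2 := by
      rw [lam0, mul_pow, mul_pow, Real.sq_sqrt hnR.le]
      have hμ1 : (μ+1) ≠ 0 := by positivity
      field_simp
    linear_combination ((a^p)^2*x) * hL2'
      + (ρ^2*(2*Real.sqrt μ)^2*x*(n:ℝ)) * hA2
      + (ρ^2*(2*Real.sqrt μ)^2*(a^μ)) * hax
  have hfin : dLam μ ρ n j * (Real.sqrt (dT μ n j))⁻¹
      = ρ * (2*Real.sqrt μ/(μ+1)) * (Sq p x / Real.sqrt (Sq μ x)) := by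
    have h1 := Real.sqrt_sq hLHS0
    have h2 := Real.sqrt_sq hRHS0
    rw [← h1, ← h2, hsq]
  rw [hfin, hpdef, hxdef]

lemma lam0_lb (μ ρ : ℝ) (hμ1 : 1 ≤ μ) (hμ2 : μ < 2) (hρ : 0 < ρ) (n : ℕ) :
    (2*ρ/3) * Real.sqrt n ≤ lam0 μ ρ n := by
  have h1 : (1:ℝ) ≤ Real.sqrt μ := by
    rw [show (1:ℝ) = Real.sqrt 1 by simp]
    exact Real.sqrt_le_sqrt hμ1
  have hc : (2:ℝ)/3 ≤ 2*Real.sqrt μ/(μ+1) := by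
    rw [le_div_iff₀ (by linarith : (0:ℝ) < μ+1)]
    nlinarith
  have h0 : (0:ℝ) ≤ ρ * Real.sqrt n := mul_nonneg hρ.le (Real.sqrt_nonneg _)
  calc (2*ρ/3) * Real.sqrt n = (ρ * Real.sqrt n) * (2/3) := by ring
    _ ≤ (ρ * Real.sqrt n) * (2*Real.sqrt μ/(μ+1)) := mul_le_mul_of_nonneg_left hc h0
    _ = lam0 μ ρ n := by rw [lam0]

lemma lam0_ub (μ ρ : ℝ) (hμ1 : 1 ≤ μ) (hμ2 : μ < 2) (hρ : 0 < ρ) (n : ℕ) :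
    lam0 μ ρ n ≤ (2*ρ) * Real.sqrt n := by
  have h2 : Real.sqrt μ ≤ 2 := by
    rw [show (2:ℝ) = Real.sqrt 4 by
      rw [show (4:ℝ) = 2^2 by norm_num, Real.sqrt_sq (by norm_num : (0:ℝ) ≤ 2)]]
    exact Real.sqrt_le_sqrt (by linarith)
  have hc : 2*Real.sqrt μ/(μ+1) ≤ 2 := by
    rw [div_le_iff₀ (by linarith : (0:ℝ) < μ+1)]
    nlinarith
  have h0 : (0:ℝ) ≤ ρ * Real.sqrt n := mul_nonneg hρ.le (Real.sqrt_nonneg _)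
  calc lam0 μ ρ n = (ρ * Real.sqrt n) * (2*Real.sqrt μ/(μ+1)) := by rw [lam0]
    _ ≤ (ρ * Real.sqrt n) * 2 := mul_le_mul_of_nonneg_left hc h0
    _ = (2*ρ) * Real.sqrt n := by ring

-- eventually (log n)^3 ≤ n^(1/4)
lemma log_cube_le : ∀ᶠ n : ℕ in Filter.atTop, (Real.log n)^(3:ℕ) ≤ (n:ℝ)^((1/4:ℝ)) := by
  have h := (isLittleO_log_rpow_rpow_atTop (3:ℝ) (by norm_num : (0:ℝ) < 1/4)).bound
    (by norm_num : (0:ℝ) < 1)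
  have h2 : ∀ᶠ x : ℝ in Filter.atTop,
      (Real.log x)^(3:ℕ) ≤ x^((1/4:ℝ)) := by
    filter_upwards [h, Filter.eventually_ge_atTop (1:ℝ)] with x hx hx1
    have hl : 0 ≤ Real.log x := Real.log_nonneg hx1
    have hx0 : (0:ℝ) ≤ x := by linarith
    have e1 : Real.log x ^ (3:ℝ) = (Real.log x)^(3:ℕ) := by
      rw [← Real.rpow_natCast (Real.log x) 3]; norm_num
    rw [Real.norm_eq_abs, Real.norm_eq_abs, one_mul, e1,
      abs_of_nonneg (by positivity), abs_of_nonneg (by positivity)] at hx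
    exact hx
  exact tendsto_natCast_atTop_atTop.eventually h2

lemma range_facts (μ ρ : ℝ) (hμ1 : 1 ≤ μ) (hμ2 : μ < 2) (hρ : 0 < ρ) (K : ℕ) :
    ∀ᶠ n : ℕ in Filter.atTop, 1 ≤ mLow μ ρ n ∧
      ⌊(n : ℝ) * (lStar n / lam0 μ ρ n) ^ ((2 : ℝ) / (μ + 1))⌋₊ ≤ n ∧
      K ≤ ⌊(n : ℝ) * (lStar n / lam0 μ ρ n) ^ ((2 : ℝ) / (μ + 1))⌋₊ := by
  have hμ0 : (0:ℝ) < μ := by linarith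
  set e : ℝ := (2:ℝ)/(μ+1) with hedef
  have he0 : 0 < e := by rw [hedef]; positivity
  have he1 : e ≤ 1 := by
    rw [hedef, div_le_one (by linarith : (0:ℝ) < μ+1)]; linarith
  have hlog1 : ∀ᶠ n : ℕ in Filter.atTop, 1 ≤ Real.log n :=
    (Real.tendsto_log_atTop.comp tendsto_natCast_atTop_atTop).eventually_ge_atTop 1
  have hu4 : Filter.Tendsto (fun n : ℕ => (n:ℝ)^((1/4:ℝ))) Filter.atTop Filter.atTop :=
    (tendsto_rpow_atTop (by norm_num)).comp tendsto_natCast_atTop_atTop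
  have hubig : ∀ᶠ n : ℕ in Filter.atTop, 3/ρ + 1 ≤ (n:ℝ)^((1/4:ℝ)) :=
    hu4.eventually_ge_atTop _
  have hubig2 : ∀ᶠ n : ℕ in Filter.atTop, (K:ℝ)*(2*ρ) ≤ (n:ℝ)^((1/4:ℝ)) :=
    hu4.eventually_ge_atTop _
  filter_upwards [hlog1, log_cube_le, hubig, hubig2, Filter.eventually_ge_atTop 1]
    with n hl1 hlc hub hub2 hn1
  have hn0 : (0:ℝ) < n := by exact_mod_cast hn1
  set u : ℝ := (n:ℝ)^((1/4:ℝ)) with hudef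
  have hu0 : 0 < u := Real.rpow_pos_of_pos hn0 _
  have hu1 : 1 ≤ u := by
    rw [hudef, show (1:ℝ) = (n:ℝ)^(0:ℝ) by rw [Real.rpow_zero]]
    exact Real.rpow_le_rpow_of_exponent_le (by exact_mod_cast hn1) (by norm_num)
  have hu4n : u^(4:ℕ) = (n:ℝ) := by
    rw [hudef, ← Real.rpow_natCast ((n:ℝ)^((1/4:ℝ))) 4, ← Real.rpow_mul hn0.le]
    norm_num
  have hsq : Real.sqrt n = u^(2:ℕ) := by
    rw [Real.sqrt_eq_rpow, hudef, ← Real.rpow_natCast ((n:ℝ)^((1/4:ℝ))) 2,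
      ← Real.rpow_mul hn0.le]
    norm_num
  clear_value u
  have hlam_ub : lam0 μ ρ n ≤ 2*ρ*u^(2:ℕ) := by
    have := lam0_ub μ ρ hμ1 hμ2 hρ n
    rw [hsq] at this; linarith
  have hlam_lb : (2*ρ/3)*u^(2:ℕ) ≤ lam0 μ ρ n := by
    have := lam0_lb μ ρ hμ1 hμ2 hρ n
    rw [hsq] at this; linarith
  have hρu : 3 + ρ ≤ ρ * u := by
    have h := mul_le_mul_of_nonneg_left hub hρ.le
    have h2 : ρ * (3/ρ + 1) = 3 + ρ := by field_simp
    linarith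
  have h3ρ : (0:ℝ) < 3 + ρ := by linarith
  have huu : (3:ℝ) + ρ ≤ u * (ρ * u) := by
    calc (3:ℝ) + ρ ≤ ρ * u := hρu
      _ ≤ u * (ρ * u) := by nlinarith [mul_le_mul_of_nonneg_right hu1 (by nlinarith : (0:ℝ) ≤ ρ * u)]
  have hlam_lb1 : 1 ≤ lam0 μ ρ n := by nlinarith [hlam_lb, huu]
  have hlam0 : 0 < lam0 μ ρ n := by linarith
  have hlog3 : (1:ℝ) ≤ (Real.log n)^(3:ℕ) := by
    calc (1:ℝ) = 1^(3:ℕ) := by norm_num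
      _ ≤ (Real.log n)^(3:ℕ) := pow_le_pow_left₀ (by norm_num) hl1 3
  refine ⟨?_, ?_, ?_⟩
  · -- 1 ≤ mLow: need floor (n * (lUpStar/lam0)^e) < n
    have hlt : (Real.log n)^(3:ℕ) < lam0 μ ρ n := by nlinarith [hlam_lb, huu, hlc, hu0, mul_le_mul_of_nonneg_left hρu (by positivity : (0:ℝ) ≤ u)]
    have hrat : lUpStar n / lam0 μ ρ n < 1 := by
      rw [lUpStar, div_lt_one hlam0]; exact hlt
    have hrat0 : 0 ≤ lUpStar n / lam0 μ ρ n := by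
      rw [lUpStar]; positivity
    have hre : (lUpStar n / lam0 μ ρ n)^e < 1 := Real.rpow_lt_one hrat0 hrat he0
    have hV : (n:ℝ) * (lUpStar n / lam0 μ ρ n)^e < n := by
      have := mul_lt_mul_of_pos_left hre hn0
      rwa [mul_one] at this
    have : ⌊(n:ℝ) * (lUpStar n / lam0 μ ρ n)^e⌋₊ < n :=
      (Nat.floor_lt (mul_nonneg hn0.le (Real.rpow_nonneg hrat0 e))).mpr hV
    rw [mLow, ← hedef]; omega
  · -- floor W ≤ n
    set X : ℝ := (Real.log n)^(3:ℕ) * lam0 μ ρ n with hXdef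
    clear_value X
    have hX1 : 1 ≤ X := by
      rw [hXdef]
      calc (1:ℝ) = 1*1 := by norm_num
        _ ≤ (Real.log n)^(3:ℕ) * lam0 μ ρ n :=
            mul_le_mul hlog3 hlam_lb1 (by norm_num) (by linarith)
    have hr : lStar n / lam0 μ ρ n = X⁻¹ := by
      rw [lStar, hXdef, div_eq_mul_inv, ← mul_inv]
    have h1 : (lStar n / lam0 μ ρ n)^e ≤ 1 := by
      rw [hr]
      exact Real.rpow_le_one (by positivity) (inv_le_one_of_one_le₀ hX1) he0.le
    have hW : (n:ℝ) * (lStar n / lam0 μ ρ n)^e ≤ n := by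
      have := mul_le_mul_of_nonneg_left h1 hn0.le
      rwa [mul_one] at this
    exact_mod_cast Nat.floor_le_of_le hW
  · -- K ≤ floor W
    set X : ℝ := (Real.log n)^(3:ℕ) * lam0 μ ρ n with hXdef
    clear_value X
    have hX1 : 1 ≤ X := by
      rw [hXdef]
      calc (1:ℝ) = 1*1 := by norm_num
        _ ≤ (Real.log n)^(3:ℕ) * lam0 μ ρ n :=
            mul_le_mul hlog3 hlam_lb1 (by norm_num) (by linarith)
    have hX0 : 0 < X := by linarith
    have hr : lStar n / lam0 μ ρ n = X⁻¹ := by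
      rw [lStar, hXdef, div_eq_mul_inv, ← mul_inv]
    have hstep : X⁻¹ ≤ (X⁻¹)^e := by
      have := Real.rpow_le_rpow_of_exponent_ge (inv_pos.mpr hX0) (inv_le_one_of_one_le₀ hX1) he1
      rwa [Real.rpow_one] at this
    have hXub : X ≤ u * (2*ρ*u^(2:ℕ)) := by
      rw [hXdef]
      have := mul_le_mul hlc hlam_ub (by linarith) (by positivity)
      linarith
    have hKle : (K:ℝ) ≤ (n:ℝ) * X⁻¹ := by
      have h2 : (K:ℝ) * X ≤ (n:ℝ) := by
        have hKu : (K:ℝ) ≤ u / (2*ρ) := by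
          rw [le_div_iff₀ (by positivity : (0:ℝ) < 2*ρ)]; linarith
        calc (K:ℝ) * X ≤ (u/(2*ρ)) * (u * (2*ρ*u^(2:ℕ))) := by
              apply mul_le_mul hKu hXub (by linarith) (by positivity)
          _ = u^(4:ℕ) := by field_simp
          _ = (n:ℝ) := hu4n
      calc (K:ℝ) = ((K:ℝ) * X) * X⁻¹ := by field_simp
        _ ≤ (n:ℝ) * X⁻¹ := by
            apply mul_le_mul_of_nonneg_right h2 (by positivity)
    have hKW : (K:ℝ) ≤ (n:ℝ) * (lStar n / lam0 μ ρ n)^e := by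
      rw [hr]
      calc (K:ℝ) ≤ (n:ℝ) * X⁻¹ := hKle
        _ ≤ (n:ℝ) * (X⁻¹)^e := mul_le_mul_of_nonneg_left hstep (by positivity)
    exact Nat.le_floor hKW

theorem dLam_over_sqrt_dT (μ ρ : ℝ) (hμ1 : 1 ≤ μ) (hμ2 : μ < 2) (hρ : 0 < ρ) :
    ∀ ε : ℝ, 0 < ε → ∃ N : ℕ, ∀ n : ℕ, N ≤ n → ∀ j : ℕ,
      mLow μ ρ n ≤ j → j ≤ mUp μ ρ n →
        |dLam μ ρ n j * (Real.sqrt (dT μ n j))⁻¹ - ρ| < ε := by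
  intro ε hε
  have hμ0 : (0:ℝ) < μ := by linarith
  have hT := ratio_tendsto μ ρ hμ1 hρ
  rw [Metric.tendsto_atTop] at hT
  obtain ⟨K, hK⟩ := hT ε hε
  have hR := range_facts μ ρ hμ1 hμ2 hρ (K+1)
  rw [Filter.eventually_atTop] at hR
  obtain ⟨N, hN⟩ := hR
  refine ⟨N, fun n hn j hj1 hj2 => ?_⟩
  obtain ⟨hm1, hF1, hF2⟩ := hN n hn
  have hj1' : 1 ≤ j := le_trans hm1 hj1
  rw [mUp] at hj2
  have hjn : j < n := by omega
  have hknk : K ≤ n - j := by omega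
  rw [key_eq μ ρ hμ0 hρ n j hj1' hjn]
  have h := hK (n-j) hknk
  rwa [Real.dist_eq] at h
end

section
/- For every γ > 0: lim_{n→∞} n^{2β} ∑_{j=m₁}^{m₂} [ (Δλ_j)³ + (Δt_j)² + (1 + λ_{j−1}^{−γ})⁴ (Δλ_j)⁴ ] = 0. -/
open Filter Real

lemma aux_rpow_sub_rpow_le {p a b : ℝ} (hp : 1 ≤ p) (hb : 0 ≤ b) (hba : b ≤ a) (ha : a ≤ 1) :
    a ^ p - b ^ p ≤ p * (a - b) := by
  rcases eq_or_lt_of_le hba with h | h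
  · subst h; simp
  · obtain ⟨c, hc, hderiv⟩ := exists_hasDerivAt_eq_slope (fun x => x ^ p)
      (fun x => p * x ^ (p - 1)) h
      (fun x _ => (Real.continuousAt_rpow_const x p (Or.inr (by linarith))).continuousWithinAt)
      (fun x _ => Real.hasDerivAt_rpow_const (Or.inr hp))
    have hc0 : 0 < c := lt_of_le_of_lt hb hc.1
    have hc1 : c ≤ 1 := le_trans hc.2.le ha
    have h1 : c ^ (p - 1) ≤ 1 := Real.rpow_le_one hc0.le hc1 (by linarith)
    have hab : 0 < a - b := by linarith
    have h2 : a ^ p - b ^ p = p * c ^ (p - 1) * (a - b) := by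
      field_simp at hderiv
      linarith [hderiv]
    rw [h2]
    have hp0 : 0 ≤ p := by linarith
    nlinarith [mul_le_mul_of_nonneg_left h1 (mul_nonneg hp0 hab.le)]

lemma aux_tendsto_zero {e M : ℝ} (he : e < 0) :
    Tendsto (fun n : ℕ => (n : ℝ) ^ e * Real.log n ^ M) atTop (nhds 0) := by
  have h := (isLittleO_log_rpow_rpow_atTop M (neg_pos.2 he)).tendsto_div_nhds_zero
  have h2 : Tendsto (fun n : ℕ => Real.log n ^ M / (n : ℝ) ^ (-e)) atTop (nhds 0) :=
    h.comp tendsto_natCast_atTop_atTop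
  refine h2.congr' ?_
  filter_upwards [eventually_ge_atTop 1] with n hn
  have hn0 : (0:ℝ) ≤ (n:ℝ) := by positivity
  rw [Real.rpow_neg hn0, div_inv_eq_mul]; ring

lemma sqrt_mu_le_two {μ : ℝ} (hμ1 : 1 ≤ μ) (hμ2 : μ < 2) : Real.sqrt μ ≤ 2 := by
  nlinarith [Real.sq_sqrt (by linarith : (0:ℝ) ≤ μ), Real.sqrt_nonneg μ]

lemma lam0_pos {μ ρ : ℝ} (hμ1 : 1 ≤ μ) (hρ : 0 < ρ) {n : ℕ} (hn : (0:ℝ) < n) :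
    0 < lam0 μ ρ n := by
  have h1 : 0 < Real.sqrt μ := Real.sqrt_pos.mpr (by linarith)
  have h2 : 0 < Real.sqrt n := Real.sqrt_pos.mpr hn
  have h3 : (0:ℝ) < μ + 1 := by linarith
  unfold lam0; positivity

lemma rpow_nat_mul (x : ℝ) (hx : 0 ≤ x) (y : ℝ) (k : ℕ) :
    (x ^ y) ^ (k : ℕ) = x ^ (y * k) := by
  rw [← Real.rpow_natCast (x ^ y) k, ← Real.rpow_mul hx]

lemma dLam_bound {μ ρ : ℝ} (hμ1 : 1 ≤ μ) (hμ2 : μ < 2) (hρ : 0 < ρ) {n j : ℕ}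
    (h1 : 1 ≤ j) (hjn : j ≤ n) :
    0 ≤ dLam μ ρ n j ∧ dLam μ ρ n j ≤ 2 * ρ * (n:ℝ) ^ (-(1/2) : ℝ) := by
  have hn0 : (0:ℝ) < n := by
    have : 1 ≤ n := le_trans h1 hjn
    exact_mod_cast Nat.lt_of_lt_of_le Nat.zero_lt_one this
  have hμ0 : (0:ℝ) < μ + 1 := by linarith
  have hj1 : (1:ℝ) ≤ (j:ℝ) := by exact_mod_cast h1
  have hjn' : (j:ℝ) ≤ (n:ℝ) := by exact_mod_cast hjn
  have hb0 : 0 ≤ 1 - (j:ℝ)/n := by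
    rw [sub_nonneg, div_le_one hn0]; exact hjn'
  have hba : 1 - (j:ℝ)/n ≤ 1 - ((j:ℝ)-1)/n := by
    have : ((j:ℝ)-1)/n ≤ (j:ℝ)/n := by gcongr; linarith
    linarith
  have ha1 : 1 - ((j:ℝ)-1)/n ≤ 1 := by
    have : 0 ≤ ((j:ℝ)-1)/n := div_nonneg (by linarith) hn0.le
    linarith
  have hform : dLam μ ρ n j
      = lam0 μ ρ n * ((1 - ((j:ℝ)-1)/n) ^ ((μ+1)/2) - (1 - (j:ℝ)/n) ^ ((μ+1)/2)) := by
    unfold dLam lamJ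
    rw [Nat.cast_sub h1, Nat.cast_one]
    ring
  have hp1 : (1:ℝ) ≤ (μ+1)/2 := by linarith
  have hmono : (1 - (j:ℝ)/n) ^ ((μ+1)/2) ≤ (1 - ((j:ℝ)-1)/n) ^ ((μ+1)/2) :=
    Real.rpow_le_rpow hb0 hba (by linarith)
  have hlm0 := lam0_pos hμ1 hρ hn0
  constructor
  · rw [hform]
    exact mul_nonneg hlm0.le (by linarith)
  · rw [hform]
    have hmvt := aux_rpow_sub_rpow_le hp1 hb0 hba ha1
    have hab : (1 - ((j:ℝ)-1)/n) - (1 - (j:ℝ)/n) = 1/n := by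
      field_simp
      ring
    rw [hab] at hmvt
    calc lam0 μ ρ n * ((1 - ((j:ℝ)-1)/n) ^ ((μ+1)/2) - (1 - (j:ℝ)/n) ^ ((μ+1)/2))
        ≤ lam0 μ ρ n * ((μ+1)/2 * (1/n)) := by
          apply mul_le_mul_of_nonneg_left hmvt hlm0.le
      _ = ρ * Real.sqrt μ * (Real.sqrt n / n) := by
          unfold lam0; field_simp
      _ ≤ 2 * ρ * (Real.sqrt n / n) := by
          have h2 := sqrt_mu_le_two hμ1 hμ2
          have hX : 0 ≤ Real.sqrt n / n := by positivity
          have := mul_le_mul_of_nonneg_right (mul_le_mul_of_nonneg_left h2 hρ.le) hX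
          linarith
      _ = 2 * ρ * (n:ℝ) ^ (-(1/2) : ℝ) := by
          congr 1
          rw [Real.sqrt_eq_rpow, div_eq_iff hn0.ne', ← Real.rpow_add_one hn0.ne']
          norm_num

lemma dT_bound {μ : ℝ} (hμ1 : 1 ≤ μ) (hμ2 : μ < 2) {n j : ℕ}
    (h1 : 1 ≤ j) (hjn : j ≤ n) :
    0 ≤ dT μ n j ∧ dT μ n j ≤ 2 / n := by
  have hn0 : (0:ℝ) < n := by
    have : 1 ≤ n := le_trans h1 hjn
    exact_mod_cast Nat.lt_of_lt_of_le Nat.zero_lt_one this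
  have hj1 : (1:ℝ) ≤ (j:ℝ) := by exact_mod_cast h1
  have hjn' : (j:ℝ) ≤ (n:ℝ) := by exact_mod_cast hjn
  have hb0 : 0 ≤ 1 - (j:ℝ)/n := by
    rw [sub_nonneg, div_le_one hn0]; exact hjn'
  have hba : 1 - (j:ℝ)/n ≤ 1 - ((j:ℝ)-1)/n := by
    have : ((j:ℝ)-1)/n ≤ (j:ℝ)/n := by gcongr; linarith
    linarith
  have ha1 : 1 - ((j:ℝ)-1)/n ≤ 1 := by
    have : 0 ≤ ((j:ℝ)-1)/n := div_nonneg (by linarith) hn0.le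
    linarith
  have hform : dT μ n j = (1 - ((j:ℝ)-1)/n) ^ μ - (1 - (j:ℝ)/n) ^ μ := by
    unfold dT tradeT
    rw [Nat.cast_sub h1, Nat.cast_one]
    ring
  constructor
  · rw [hform, sub_nonneg]
    exact Real.rpow_le_rpow hb0 hba (by linarith)
  · rw [hform]
    have hmvt := aux_rpow_sub_rpow_le hμ1 hb0 hba ha1
    have hab : (1 - ((j:ℝ)-1)/n) - (1 - (j:ℝ)/n) = 1/n := by field_simp; ring
    rw [hab] at hmvt
    calc (1 - ((j:ℝ)-1)/n) ^ μ - (1 - (j:ℝ)/n) ^ μ ≤ μ * (1/n) := hmvt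
      _ ≤ 2 / n := by
        rw [mul_one_div]
        gcongr <;> linarith

lemma lamJ_lower {μ ρ : ℝ} (hμ1 : 1 ≤ μ) (hρ : 0 < ρ) {n j : ℕ} (hn0 : (0:ℝ) < n)
    (hl : 0 < lStar n)
    (hk : (lStar n / lam0 μ ρ n) ^ ((2:ℝ)/(μ+1)) ≤ 1 - (j:ℝ)/n) :
    lStar n ≤ lamJ μ ρ n j := by
  have hμ0 : (0:ℝ) < μ + 1 := by linarith
  have hlm0 := lam0_pos hμ1 hρ hn0
  have hbase : 0 ≤ lStar n / lam0 μ ρ n := by positivity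
  have h1 : ((lStar n / lam0 μ ρ n) ^ ((2:ℝ)/(μ+1))) ^ ((μ+1)/2)
      ≤ (1 - (j:ℝ)/n) ^ ((μ+1)/2) :=
    Real.rpow_le_rpow (Real.rpow_nonneg hbase _) hk (by positivity)
  rw [← Real.rpow_mul hbase] at h1
  have he : (2:ℝ)/(μ+1) * ((μ+1)/2) = 1 := by field_simp
  rw [he, Real.rpow_one] at h1
  unfold lamJ
  calc lStar n = lam0 μ ρ n * (lStar n / lam0 μ ρ n) := by field_simp
    _ ≤ lam0 μ ρ n * (1 - (j:ℝ)/n) ^ ((μ+1)/2) := by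
        exact mul_le_mul_of_nonneg_left h1 hlm0.le

lemma one_le_rpow_of_one_le {x y : ℝ} (hx : 1 ≤ x) (hy : 0 ≤ y) : 1 ≤ x ^ y := by
  have := Real.rpow_le_rpow_of_exponent_le hx hy
  rwa [Real.rpow_zero] at this

lemma lStar_rpow_neg {n : ℕ} (hL : 1 ≤ Real.log n) (γ : ℝ) :
    lStar n ^ (-γ) = Real.log n ^ ((3:ℝ) * γ) := by
  have hL0 : (0:ℝ) ≤ Real.log n := by linarith
  have h3 : (0:ℝ) ≤ Real.log n ^ (3:ℕ) := by positivity
  unfold lStar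
  rw [← Real.rpow_natCast (Real.log n) 3, Real.inv_rpow (by positivity), Real.rpow_neg (by positivity),
    inv_inv, ← Real.rpow_mul hL0]
  push_cast
  ring_nf

lemma summand_bound {μ ρ γ : ℝ} (hμ1 : 1 ≤ μ) (hμ2 : μ < 2) (hρ : 0 < ρ) (hγ : 0 < γ)
    {n j : ℕ} (hL : 1 ≤ Real.log n) (h1j : 1 ≤ j) (hjn : j ≤ n)
    (hl : 0 < lStar n) (hlam : lStar n ≤ lamJ μ ρ n (j - 1)) :
    0 ≤ (dLam μ ρ n j) ^ 3 + (dT μ n j) ^ 2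
        + (1 + lamJ μ ρ n (j - 1) ^ (-γ)) ^ 4 * (dLam μ ρ n j) ^ 4
    ∧ (dLam μ ρ n j) ^ 3 + (dT μ n j) ^ 2
        + (1 + lamJ μ ρ n (j - 1) ^ (-γ)) ^ 4 * (dLam μ ρ n j) ^ 4
      ≤ (8*ρ^3 + 4 + 256*ρ^4) * (Real.log n ^ ((12:ℝ)*γ) * (n:ℝ) ^ (-(3/2) : ℝ)) := by
  have hn0 : (0:ℝ) < n := by
    have : 1 ≤ n := le_trans h1j hjn
    exact_mod_cast Nat.lt_of_lt_of_le Nat.zero_lt_one this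
  have hn1 : (1:ℝ) ≤ n := by exact_mod_cast le_trans h1j hjn
  have hL0 : (0:ℝ) < Real.log n := by linarith
  obtain ⟨hdl0, hdl⟩ := dLam_bound hμ1 hμ2 hρ h1j hjn
  obtain ⟨hdt0, hdt⟩ := dT_bound hμ1 hμ2 h1j hjn
  have hlampos : 0 < lamJ μ ρ n (j - 1) := lt_of_lt_of_le hl hlam
  have hg0 : 0 ≤ lamJ μ ρ n (j - 1) ^ (-γ) := Real.rpow_nonneg hlampos.le _
  have hgb : lamJ μ ρ n (j - 1) ^ (-γ) ≤ Real.log n ^ ((3:ℝ)*γ) := by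
    rw [← lStar_rpow_neg hL γ]
    exact Real.rpow_le_rpow_of_nonpos hl hlam (by linarith)
  have hL1 : 1 ≤ Real.log n ^ ((3:ℝ)*γ) := one_le_rpow_of_one_le hL (by positivity)
  have hL12 : 1 ≤ Real.log n ^ ((12:ℝ)*γ) := one_le_rpow_of_one_le hL (by positivity)
  -- first term
  have ht1 : (dLam μ ρ n j) ^ 3 ≤ 8*ρ^3 * (n:ℝ) ^ (-(3/2) : ℝ) := by
    calc (dLam μ ρ n j) ^ 3 ≤ (2 * ρ * (n:ℝ) ^ (-(1/2) : ℝ)) ^ 3 :=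
          pow_le_pow_left₀ hdl0 hdl 3
      _ = 8*ρ^3 * ((n:ℝ) ^ (-(1/2) : ℝ)) ^ (3:ℕ) := by ring
      _ = 8*ρ^3 * (n:ℝ) ^ (-(3/2) : ℝ) := by
          rw [rpow_nat_mul _ hn0.le]
          norm_num
  -- second term
  have hn2 : ((n:ℝ) ^ (2:ℕ))⁻¹ = (n:ℝ) ^ (-(2:ℝ)) := by
    rw [← Real.rpow_natCast (n:ℝ) 2, ← Real.rpow_neg hn0.le]
    norm_num
  have hcomp : (n:ℝ) ^ (-(2:ℝ)) ≤ (n:ℝ) ^ (-(3/2) : ℝ) :=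
    Real.rpow_le_rpow_of_exponent_le hn1 (by norm_num)
  have ht2 : (dT μ n j) ^ 2 ≤ 4 * (n:ℝ) ^ (-(3/2) : ℝ) := by
    calc (dT μ n j) ^ 2 ≤ (2/(n:ℝ)) ^ 2 := pow_le_pow_left₀ hdt0 hdt 2
      _ = 4 * ((n:ℝ) ^ (2:ℕ))⁻¹ := by rw [div_pow]; ring
      _ = 4 * (n:ℝ) ^ (-(2:ℝ)) := by rw [hn2]
      _ ≤ 4 * (n:ℝ) ^ (-(3/2) : ℝ) := by linarith
  -- third term
  have hfac : (1 + lamJ μ ρ n (j - 1) ^ (-γ)) ^ 4 ≤ 16 * Real.log n ^ ((12:ℝ)*γ) := by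
    calc (1 + lamJ μ ρ n (j - 1) ^ (-γ)) ^ 4 ≤ (2 * Real.log n ^ ((3:ℝ)*γ)) ^ 4 := by
          apply pow_le_pow_left₀ (by linarith) (by linarith)
      _ = 16 * (Real.log n ^ ((3:ℝ)*γ)) ^ (4:ℕ) := by ring
      _ = 16 * Real.log n ^ ((12:ℝ)*γ) := by
          rw [rpow_nat_mul _ hL0.le]
          norm_num
          ring_nf
  have hdl4 : (dLam μ ρ n j) ^ 4 ≤ 16 * ρ^4 * (n:ℝ) ^ (-(2:ℝ)) := by
    calc (dLam μ ρ n j) ^ 4 ≤ (2 * ρ * (n:ℝ) ^ (-(1/2) : ℝ)) ^ 4 :=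
          pow_le_pow_left₀ hdl0 hdl 4
      _ = 16*ρ^4 * ((n:ℝ) ^ (-(1/2) : ℝ)) ^ (4:ℕ) := by ring
      _ = 16*ρ^4 * (n:ℝ) ^ (-(2:ℝ)) := by
          rw [rpow_nat_mul _ hn0.le]
          norm_num
  have ht3 : (1 + lamJ μ ρ n (j - 1) ^ (-γ)) ^ 4 * (dLam μ ρ n j) ^ 4
      ≤ 256 * ρ^4 * (Real.log n ^ ((12:ℝ)*γ) * (n:ℝ) ^ (-(3/2) : ℝ)) := by
    have h4n : 0 ≤ (dLam μ ρ n j) ^ 4 := by positivity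
    have hb4 : 0 ≤ (1 + lamJ μ ρ n (j - 1) ^ (-γ)) ^ 4 := by positivity
    calc (1 + lamJ μ ρ n (j - 1) ^ (-γ)) ^ 4 * (dLam μ ρ n j) ^ 4
        ≤ (16 * Real.log n ^ ((12:ℝ)*γ)) * (16 * ρ^4 * (n:ℝ) ^ (-(2:ℝ))) := by
          apply mul_le_mul hfac hdl4 h4n (by positivity)
      _ = 256 * ρ^4 * (Real.log n ^ ((12:ℝ)*γ) * (n:ℝ) ^ (-(2:ℝ))) := by ring
      _ ≤ 256 * ρ^4 * (Real.log n ^ ((12:ℝ)*γ) * (n:ℝ) ^ (-(3/2) : ℝ)) := by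
          have h12 : 0 ≤ Real.log n ^ ((12:ℝ)*γ) := by linarith
          exact mul_le_mul_of_nonneg_left (mul_le_mul_of_nonneg_left hcomp h12) (by positivity)
  constructor
  · have a1 : 0 ≤ (dLam μ ρ n j) ^ 3 := pow_nonneg hdl0 3
    have a2 : 0 ≤ (dT μ n j) ^ 2 := sq_nonneg _
    have a3 : 0 ≤ (1 + lamJ μ ρ n (j - 1) ^ (-γ)) ^ 4 * (dLam μ ρ n j) ^ 4 := by positivity
    linarith
  · have hY : 0 ≤ (n:ℝ) ^ (-(3/2) : ℝ) := Real.rpow_nonneg hn0.le _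
    have hYX : (n:ℝ) ^ (-(3/2) : ℝ) ≤ Real.log n ^ ((12:ℝ)*γ) * (n:ℝ) ^ (-(3/2) : ℝ) := by
      have := mul_le_mul_of_nonneg_right hL12 hY
      linarith
    have e1 : 8*ρ^3 * (n:ℝ) ^ (-(3/2) : ℝ)
        ≤ 8*ρ^3 * (Real.log n ^ ((12:ℝ)*γ) * (n:ℝ) ^ (-(3/2) : ℝ)) :=
      mul_le_mul_of_nonneg_left hYX (by positivity)
    have e2 : 4 * (n:ℝ) ^ (-(3/2) : ℝ)
        ≤ 4 * (Real.log n ^ ((12:ℝ)*γ) * (n:ℝ) ^ (-(3/2) : ℝ)) :=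
      mul_le_mul_of_nonneg_left hYX (by norm_num)
    set X := Real.log n ^ ((12:ℝ)*γ) * (n:ℝ) ^ (-(3/2) : ℝ) with hX
    linarith [ht1, ht2, ht3, e1, e2]

lemma xstar_eq {μ ρ : ℝ} (hμ1 : 1 ≤ μ) (hρ : 0 < ρ) {n : ℕ}
    (hn0 : (0:ℝ) < n) (hL0 : (0:ℝ) ≤ Real.log n) :
    (n:ℝ) * (lUpStar n / lam0 μ ρ n) ^ ((2:ℝ)/(μ+1)) =
      (ρ * (2 * Real.sqrt μ / (μ+1))) ^ (-(2/(μ+1)):ℝ) *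
        ((n:ℝ) ^ ((1:ℝ) - 2/(μ+1)/2) * Real.log n ^ ((3:ℝ) * (2/(μ+1)))) := by
  have hμ0 : (0:ℝ) < μ + 1 := by linarith
  have hμs : 0 < Real.sqrt μ := Real.sqrt_pos.mpr (by linarith)
  have hcpos : 0 < ρ * (2 * Real.sqrt μ / (μ+1)) := by positivity
  have hnr : (0:ℝ) < (n:ℝ) ^ ((1:ℝ)/2) := Real.rpow_pos_of_pos hn0 _
  have h1 : lam0 μ ρ n = (ρ * (2 * Real.sqrt μ / (μ+1))) * (n:ℝ) ^ ((1:ℝ)/2) := by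
    unfold lam0
    rw [Real.sqrt_eq_rpow]
    ring
  rw [h1]
  unfold lUpStar
  rw [Real.div_rpow (by positivity) (by positivity),
    Real.mul_rpow hcpos.le hnr.le,
    ← Real.rpow_natCast (Real.log n) 3, ← Real.rpow_mul hL0,
    ← Real.rpow_mul hn0.le,
    Real.rpow_neg hcpos.le,
    Real.rpow_sub hn0, Real.rpow_one]
  push_cast
  have he1 : (1:ℝ)/2 * (2/(μ+1)) = 2/(μ+1)/2 := by ring
  have he2 : (3:ℝ) * (2/(μ+1)) = 2/(μ+1) * 3 := by ring
  rw [he1, he2]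
  have hne1 : ((ρ * (2 * Real.sqrt μ / (μ+1))) ^ ((2:ℝ)/(μ+1))) ≠ 0 :=
    (Real.rpow_pos_of_pos hcpos _).ne'
  have hne2 : ((n:ℝ) ^ ((2:ℝ)/(μ+1)/2)) ≠ 0 := (Real.rpow_pos_of_pos hn0 _).ne'
  field_simp


set_option maxHeartbeats 1000000 in
/- STATEMENT 5: For every γ > 0,
   lim_n n^{2β} ∑_{j=m₁}^{m₂} [ (Δλ_j)³ + (Δt_j)² + (1 + λ_{j−1}^{−γ})⁴ (Δλ_j)⁴ ] = 0,
   where β = μ/(2(μ+1)). -/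
theorem sum_dLam_negligible (μ ρ γ : ℝ) (hμ1 : 1 ≤ μ) (hμ2 : μ < 2) (hρ : 0 < ρ)
    (hγ : 0 < γ) :
    Filter.Tendsto
      (fun n : ℕ => (n : ℝ) ^ (2 * (μ / (2 * (μ + 1)))) *
        ∑ j ∈ Finset.Icc (mLow μ ρ n) (mUp μ ρ n),
          ((dLam μ ρ n j) ^ 3 + (dT μ n j) ^ 2
            + (1 + lamJ μ ρ n (j - 1) ^ (-γ)) ^ 4 * (dLam μ ρ n j) ^ 4))
      Filter.atTop (nhds 0) := by
  have hμ0 : (0:ℝ) < μ + 1 := by linarith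
  have hμs : 0 < Real.sqrt μ := Real.sqrt_pos.mpr (by linarith)
  set K : ℝ := (ρ * (2 * Real.sqrt μ / (μ+1))) ^ (-(2/(μ+1)):ℝ) with hK_def
  have hK0 : 0 < K := Real.rpow_pos_of_pos (by positivity) _
  set CB : ℝ := 8*ρ^3 + 4 + 256*ρ^4 with hCB_def
  have hCB0 : 0 < CB := by positivity
  set e : ℝ := 2 * (μ / (2 * (μ + 1))) + ((1:ℝ) - 2/(μ+1)/2) + -(3/2:ℝ) with he_def
  have he : e < 0 := by
    have h : e * (2*(μ+1)) = μ - 3 := by rw [he_def]; field_simp; ring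
    nlinarith
  set M : ℝ := (3:ℝ) * (2/(μ+1)) + (12:ℝ)*γ with hM_def
  -- (l^*/λ₀)^q → 0
  have hsm : Tendsto (fun n : ℕ => (lUpStar n / lam0 μ ρ n) ^ ((2:ℝ)/(μ+1)))
      atTop (nhds 0) := by
    have h1 : Tendsto (fun n : ℕ => (n:ℝ)^(-(1/2):ℝ) * Real.log n ^ (((3:ℕ)):ℝ))
        atTop (nhds 0) := aux_tendsto_zero (by norm_num)
    have h2 : Tendsto (fun n:ℕ => lUpStar n / lam0 μ ρ n) atTop (nhds 0) := by
      have h3 := h1.const_mul ((ρ * (2*Real.sqrt μ/(μ+1)))⁻¹)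
      rw [mul_zero] at h3
      refine h3.congr' ?_
      filter_upwards [eventually_ge_atTop 1] with n hn
      have hn0 : (0:ℝ) < n := by exact_mod_cast Nat.lt_of_lt_of_le Nat.zero_lt_one hn
      have hc : (0:ℝ) < ρ * (2*Real.sqrt μ/(μ+1)) := by positivity
      have hl0 : lam0 μ ρ n = (ρ * (2 * Real.sqrt μ / (μ+1))) * (n:ℝ) ^ ((1:ℝ)/2) := by
        unfold lam0; rw [Real.sqrt_eq_rpow]; ring
      unfold lUpStar
      rw [hl0, Real.rpow_natCast, Real.rpow_neg hn0.le]
      have hnh : ((n:ℝ) ^ ((1:ℝ)/2)) ≠ 0 := (Real.rpow_pos_of_pos hn0 _).ne'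
      field_simp
    have h4 := h2.rpow_const (Or.inr (by positivity : (0:ℝ) ≤ 2/(μ+1)))
    rwa [Real.zero_rpow (ne_of_gt (by positivity : (0:ℝ) < 2/(μ+1)))] at h4
  have hhalf : ∀ᶠ n:ℕ in atTop, (lUpStar n / lam0 μ ρ n) ^ ((2:ℝ)/(μ+1)) ≤ 1/2 :=
    hsm.eventually (eventually_le_nhds (by norm_num))
  have main : ∀ᶠ n:ℕ in atTop,
      0 ≤ (n : ℝ) ^ (2 * (μ / (2 * (μ + 1)))) *
        ∑ j ∈ Finset.Icc (mLow μ ρ n) (mUp μ ρ n),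
          ((dLam μ ρ n j) ^ 3 + (dT μ n j) ^ 2
            + (1 + lamJ μ ρ n (j - 1) ^ (-γ)) ^ 4 * (dLam μ ρ n j) ^ 4)
      ∧ (n : ℝ) ^ (2 * (μ / (2 * (μ + 1)))) *
        ∑ j ∈ Finset.Icc (mLow μ ρ n) (mUp μ ρ n),
          ((dLam μ ρ n j) ^ 3 + (dT μ n j) ^ 2
            + (1 + lamJ μ ρ n (j - 1) ^ (-γ)) ^ 4 * (dLam μ ρ n j) ^ 4)
        ≤ (CB*(K+1)) * ((n:ℝ)^e * Real.log n ^ M) := by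
    filter_upwards [eventually_ge_atTop 3, hhalf] with n hn3 hhf
    have hn0 : (0:ℝ) < n := by exact_mod_cast (by omega : 0 < n)
    have hn1 : (1:ℝ) ≤ n := by exact_mod_cast (by omega : 1 ≤ n)
    have hn3' : (3:ℝ) ≤ n := by exact_mod_cast hn3
    have hL : 1 ≤ Real.log n := by
      rw [Real.le_log_iff_exp_le hn0]
      calc Real.exp 1 ≤ 2.7182818286 := Real.exp_one_lt_d9.le
        _ ≤ 3 := by norm_num
        _ ≤ n := hn3'
    have hL0 : (0:ℝ) < Real.log n := by linarith
    have hlm0 := lam0_pos hμ1 hρ hn0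
    have hlpos : 0 < lStar n := by
      unfold lStar
      have : (0:ℝ) < Real.log n ^ (3:ℕ) := by positivity
      positivity
    have hx0 : 0 ≤ (n:ℝ) * (lUpStar n / lam0 μ ρ n) ^ ((2:ℝ)/(μ+1)) := by
      apply mul_nonneg hn0.le (Real.rpow_nonneg ?_ _)
      have : (0:ℝ) ≤ Real.log n ^ (3:ℕ) := by positivity
      unfold lUpStar
      positivity
    have hxle : (n:ℝ) * (lUpStar n / lam0 μ ρ n) ^ ((2:ℝ)/(μ+1)) ≤ (n:ℝ) - 1 := by
      have := mul_le_mul_of_nonneg_left hhf hn0.le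
      linarith
    have hfu : ⌊(n:ℝ) * (lUpStar n / lam0 μ ρ n) ^ ((2:ℝ)/(μ+1))⌋₊ ≤ n - 1 := by
      have hcast : ((n - 1 : ℕ):ℝ) = (n:ℝ) - 1 := by
        rw [Nat.cast_sub (by omega : 1 ≤ n), Nat.cast_one]
      calc ⌊(n:ℝ) * (lUpStar n / lam0 μ ρ n) ^ ((2:ℝ)/(μ+1))⌋₊
          ≤ ⌊((n-1:ℕ):ℝ)⌋₊ := Nat.floor_mono (by rw [hcast]; exact hxle)
        _ = n - 1 := Nat.floor_natCast _
    have hm1 : 1 ≤ mLow μ ρ n := by unfold mLow; omega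
    have hls : lStar n ≤ lUpStar n := by
      unfold lStar lUpStar
      have h3 : 1 ≤ Real.log n ^ (3:ℕ) := one_le_pow₀ hL
      exact le_trans (inv_le_one_of_one_le₀ h3) h3
    have hxm : (n:ℝ) * (lStar n / lam0 μ ρ n) ^ ((2:ℝ)/(μ+1))
        ≤ (n:ℝ) * (lUpStar n / lam0 μ ρ n) ^ ((2:ℝ)/(μ+1)) := by
      apply mul_le_mul_of_nonneg_left ?_ hn0.le
      apply Real.rpow_le_rpow (by positivity) ((div_le_div_iff_of_pos_right hlm0).mpr hls) (by positivity)
    have hflo : ⌊(n:ℝ) * (lStar n / lam0 μ ρ n) ^ ((2:ℝ)/(μ+1))⌋₊ ≤ n - 1 :=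
      le_trans (Nat.floor_mono hxm) hfu
    -- per-j bound
    have hjbound : ∀ j ∈ Finset.Icc (mLow μ ρ n) (mUp μ ρ n),
        0 ≤ (dLam μ ρ n j) ^ 3 + (dT μ n j) ^ 2
            + (1 + lamJ μ ρ n (j - 1) ^ (-γ)) ^ 4 * (dLam μ ρ n j) ^ 4
        ∧ (dLam μ ρ n j) ^ 3 + (dT μ n j) ^ 2
            + (1 + lamJ μ ρ n (j - 1) ^ (-γ)) ^ 4 * (dLam μ ρ n j) ^ 4
          ≤ CB * (Real.log n ^ ((12:ℝ)*γ) * (n:ℝ) ^ (-(3/2) : ℝ)) := by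
      intro j hj
      rw [Finset.mem_Icc] at hj
      have h1j : 1 ≤ j := le_trans hm1 hj.1
      have hjn : j ≤ n := le_trans hj.2 (Nat.sub_le _ _)
      have hmu1 : 1 ≤ mUp μ ρ n := le_trans h1j hj.2
      have hk : (lStar n / lam0 μ ρ n) ^ ((2:ℝ)/(μ+1)) ≤ 1 - ((j-1:ℕ):ℝ)/n := by
        have hjm : ((j-1:ℕ):ℝ) ≤ (mUp μ ρ n : ℝ) - 1 := by
          have h5 : j - 1 ≤ mUp μ ρ n - 1 := by omega
          calc ((j-1:ℕ):ℝ) ≤ ((mUp μ ρ n - 1:ℕ):ℝ) := by exact_mod_cast h5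
            _ = (mUp μ ρ n:ℝ) - 1 := by rw [Nat.cast_sub hmu1, Nat.cast_one]
        have hmupn : (mUp μ ρ n : ℝ)
            = (n:ℝ) - (⌊(n:ℝ) * (lStar n / lam0 μ ρ n) ^ ((2:ℝ)/(μ+1))⌋₊:ℝ) := by
          have h6 : mUp μ ρ n = n - ⌊(n:ℝ) * (lStar n / lam0 μ ρ n) ^ ((2:ℝ)/(μ+1))⌋₊ := rfl
          rw [h6, Nat.cast_sub (by omega : ⌊(n:ℝ) * (lStar n / lam0 μ ρ n) ^ ((2:ℝ)/(μ+1))⌋₊ ≤ n)]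
        have hfl1 : (n:ℝ) * (lStar n / lam0 μ ρ n) ^ ((2:ℝ)/(μ+1))
            < (⌊(n:ℝ) * (lStar n / lam0 μ ρ n) ^ ((2:ℝ)/(μ+1))⌋₊:ℝ) + 1 :=
          Nat.lt_floor_add_one _
        have hq : (lStar n / lam0 μ ρ n) ^ ((2:ℝ)/(μ+1))
            = (n:ℝ) * (lStar n / lam0 μ ρ n) ^ ((2:ℝ)/(μ+1)) / n := by
          rw [mul_div_cancel_left₀ _ hn0.ne']
        rw [hq, div_le_iff₀ hn0]
        have h7 : (1 - ((j-1:ℕ):ℝ)/n) * n = n - ((j-1:ℕ):ℝ) := by field_simp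
        rw [h7]
        linarith
      have hlam : lStar n ≤ lamJ μ ρ n (j-1) := lamJ_lower hμ1 hρ hn0 hlpos hk
      exact summand_bound hμ1 hμ2 hρ hγ hL h1j hjn hlpos hlam
    constructor
    · exact mul_nonneg (Real.rpow_nonneg hn0.le _)
        (Finset.sum_nonneg fun j hj => (hjbound j hj).1)
    · have hBnn : (0:ℝ) ≤ CB * (Real.log n ^ ((12:ℝ)*γ) * (n:ℝ) ^ (-(3/2) : ℝ)) :=
        mul_nonneg hCB0.le
          (mul_nonneg (Real.rpow_nonneg hL0.le _) (Real.rpow_nonneg hn0.le _))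
      have hsum : ∑ j ∈ Finset.Icc (mLow μ ρ n) (mUp μ ρ n),
          ((dLam μ ρ n j) ^ 3 + (dT μ n j) ^ 2
            + (1 + lamJ μ ρ n (j - 1) ^ (-γ)) ^ 4 * (dLam μ ρ n j) ^ 4)
          ≤ ((Finset.Icc (mLow μ ρ n) (mUp μ ρ n)).card : ℝ)
            * (CB * (Real.log n ^ ((12:ℝ)*γ) * (n:ℝ) ^ (-(3/2) : ℝ))) := by
        have := Finset.sum_le_card_nsmul _ _ _ (fun j hj => (hjbound j hj).2)
        rwa [nsmul_eq_mul] at this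
      have hcard : ((Finset.Icc (mLow μ ρ n) (mUp μ ρ n)).card : ℝ)
          ≤ (n:ℝ) * (lUpStar n / lam0 μ ρ n) ^ ((2:ℝ)/(μ+1)) + 1 := by
        rw [Nat.card_Icc]
        have h1 : mUp μ ρ n + 1 - mLow μ ρ n
            ≤ ⌊(n:ℝ) * (lUpStar n / lam0 μ ρ n) ^ ((2:ℝ)/(μ+1))⌋₊ + 1 := by
          unfold mLow mUp; omega
        calc ((mUp μ ρ n + 1 - mLow μ ρ n : ℕ):ℝ)
            ≤ ((⌊(n:ℝ) * (lUpStar n / lam0 μ ρ n) ^ ((2:ℝ)/(μ+1))⌋₊ + 1:ℕ):ℝ) := by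
              exact_mod_cast h1
          _ ≤ (n:ℝ) * (lUpStar n / lam0 μ ρ n) ^ ((2:ℝ)/(μ+1)) + 1 := by
              push_cast; linarith [Nat.floor_le hx0]
      have hone : (1:ℝ) ≤ (n:ℝ) ^ ((1:ℝ) - 2/(μ+1)/2) * Real.log n ^ ((3:ℝ)*(2/(μ+1))) := by
        have hexp : (0:ℝ) ≤ 1 - 2/(μ+1)/2 := by
          have h8 : 2/(μ+1)/2 ≤ 1 := by
            rw [div_div, div_le_one (by linarith)]; linarith
          linarith
        have h1 : (1:ℝ) ≤ (n:ℝ) ^ ((1:ℝ) - 2/(μ+1)/2) := one_le_rpow_of_one_le hn1 hexp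
        have h2 : (1:ℝ) ≤ Real.log n ^ ((3:ℝ)*(2/(μ+1))) :=
          one_le_rpow_of_one_le hL (by positivity)
        nlinarith
      have hxeq := xstar_eq hμ1 hρ hn0 hL0.le
      have hcard2 : ((Finset.Icc (mLow μ ρ n) (mUp μ ρ n)).card : ℝ)
          ≤ (K+1) * ((n:ℝ) ^ ((1:ℝ) - 2/(μ+1)/2) * Real.log n ^ ((3:ℝ)*(2/(μ+1)))) := by
        rw [hxeq, ← hK_def] at hcard
        nlinarith [hcard, hone, hK0]
      have hF : (n : ℝ) ^ (2 * (μ / (2 * (μ + 1)))) *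
          ∑ j ∈ Finset.Icc (mLow μ ρ n) (mUp μ ρ n),
            ((dLam μ ρ n j) ^ 3 + (dT μ n j) ^ 2
              + (1 + lamJ μ ρ n (j - 1) ^ (-γ)) ^ 4 * (dLam μ ρ n j) ^ 4)
          ≤ (n : ℝ) ^ (2 * (μ / (2 * (μ + 1)))) *
            (((K+1) * ((n:ℝ) ^ ((1:ℝ) - 2/(μ+1)/2) * Real.log n ^ ((3:ℝ)*(2/(μ+1)))))
              * (CB * (Real.log n ^ ((12:ℝ)*γ) * (n:ℝ) ^ (-(3/2) : ℝ)))) := by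
        apply mul_le_mul_of_nonneg_left ?_ (Real.rpow_nonneg hn0.le _)
        calc ∑ j ∈ Finset.Icc (mLow μ ρ n) (mUp μ ρ n),
            ((dLam μ ρ n j) ^ 3 + (dT μ n j) ^ 2
              + (1 + lamJ μ ρ n (j - 1) ^ (-γ)) ^ 4 * (dLam μ ρ n j) ^ 4)
            ≤ ((Finset.Icc (mLow μ ρ n) (mUp μ ρ n)).card : ℝ)
              * (CB * (Real.log n ^ ((12:ℝ)*γ) * (n:ℝ) ^ (-(3/2) : ℝ))) := hsum
          _ ≤ ((K+1) * ((n:ℝ) ^ ((1:ℝ) - 2/(μ+1)/2) * Real.log n ^ ((3:ℝ)*(2/(μ+1)))))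
              * (CB * (Real.log n ^ ((12:ℝ)*γ) * (n:ℝ) ^ (-(3/2) : ℝ))) :=
            mul_le_mul_of_nonneg_right hcard2 hBnn
      refine hF.trans (le_of_eq ?_)
      rw [he_def, hM_def]
      rw [Real.rpow_add hn0, Real.rpow_add hn0, Real.rpow_add hL0]
      ring
  refine squeeze_zero' (main.mono fun n h => h.1) (main.mono fun n h => h.2) ?_
  have hfin := (aux_tendsto_zero (M := M) he).const_mul (CB*(K+1))
  rwa [mul_zero] at hfin
end

section
/- Let δ ≥ 0, let N have a Poisson distribution with parameter δ, and let (ξ_j)_{j≥1} be i.i.d. real random variables with ξ_1 > −1 almost surely and E[ξ_1²] < ∞, with N, ξ_1, ξ_2, … mutually independent. Then E[ ( ∏_{j=1}^{N} (1+ξ_j) − 1 )² ] = exp( δ E[2ξ_1 + ξ_1²] ) − 2 exp( δ E[ξ_1] ) + 1. -/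
open MeasureTheory ProbabilityTheory

/-- The family consisting of the Poisson counter `N` (cast to ℝ) followed by the
jump sizes `ξ 0, ξ 1, …`; mutual independence of this family encodes the mutual
independence of `N, ξ₁, ξ₂, …`. -/
noncomputable def poissonJumpFamily {Ω : Type*} (N : Ω → ℕ) (ξ : ℕ → Ω → ℝ) :
    ℕ → Ω → ℝ :=
  fun i => match i with
    | 0 => fun ω => (N ω : ℝ)
    | Nat.succ j => ξ j

section Aux

open ENNReal

variable {Ω : Type*} [MeasureSpace Ω] [IsProbabilityMeasure (ℙ : Measure Ω)]

lemma aux_lintegral_prod_indep (G : ℕ → Ω → ℝ≥0∞)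
    (hmeas : ∀ i, Measurable (G i))
    (hindep : iIndepFun G ℙ)
    (s : Finset ℕ) :
    ∫⁻ ω, ∏ i ∈ s, G i ω ∂ℙ = ∏ i ∈ s, ∫⁻ ω, G i ω ∂ℙ := by
  classical
  induction s using Finset.induction_on with
  | empty => simp
  | @insert a s ha ih =>
    have hprodmeas : Measurable (fun ω => ∏ i ∈ s, G i ω) :=
      Finset.measurable_prod s fun i _ => hmeas i
    have hindepf : IndepFun (G a) (fun ω => ∏ i ∈ s, G i ω) ℙ := by
      have h2 := (hindep.indepFun_finset_prod_of_notMem hmeas ha).symm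
      have he : (∏ j ∈ s, G j) = fun ω => ∏ j ∈ s, G j ω := by
        funext ω; simp [Finset.prod_apply]
      rwa [he] at h2
    rw [Finset.prod_insert ha,
      lintegral_congr (fun ω => by rw [Finset.prod_insert ha]),
      lintegral_mul_eq_lintegral_mul_lintegral_of_indepFun'' (hmeas a).aemeasurable
        hprodmeas.aemeasurable hindepf, ih]

lemma aux_core (N : Ω → ℕ) (ξ : ℕ → Ω → ℝ)
    (hNmeas : Measurable N) (hξmeas : ∀ j, Measurable (ξ j))
    (hindep : iIndepFun
      (poissonJumpFamily N ξ) ℙ)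
    (F : ℝ → ℝ≥0∞) (hF : Measurable F) :
    ∫⁻ ω, ∏ j ∈ Finset.range (N ω), F (ξ j ω) ∂ℙ
      = ∑' k : ℕ, ℙ {ω | N ω = k} * ∏ j ∈ Finset.range k, ∫⁻ ω, F (ξ j ω) ∂ℙ := by
  classical
  have hset : ∀ k, MeasurableSet {ω | N ω = k} := fun k => hNmeas (measurableSet_singleton k)
  have hZmeas : ∀ i, Measurable (poissonJumpFamily N ξ i) := by
    intro i
    cases i with
    | zero => exact measurable_from_top.comp hNmeas
    | succ j => exact hξmeas j
  have hpt : ∀ ω, ∏ j ∈ Finset.range (N ω), F (ξ j ω)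
      = ∑' k : ℕ, Set.indicator {ω' | N ω' = k}
          (fun ω' => ∏ j ∈ Finset.range k, F (ξ j ω')) ω := by
    intro ω
    have h1 : ∀ k : ℕ, k ≠ N ω → Set.indicator {ω' | N ω' = k}
        (fun ω' => ∏ j ∈ Finset.range k, F (ξ j ω')) ω = 0 := fun k hk =>
      Set.indicator_of_notMem
        (show ω ∉ {ω' | N ω' = k} from fun h => hk (Eq.symm h)) _
    exact ((tsum_eq_single (N ω) h1).trans
      (Set.indicator_of_mem (show ω ∈ {ω' | N ω' = N ω} from rfl) _)).symm
  have hprodmeas : ∀ k : ℕ, Measurable fun ω => ∏ j ∈ Finset.range k, F (ξ j ω) :=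
    fun k => Finset.measurable_prod _ fun j _ => hF.comp (hξmeas j)
  rw [lintegral_congr hpt,
    lintegral_tsum (fun k => ((hprodmeas k).indicator (hset k)).aemeasurable)]
  refine tsum_congr fun k => ?_
  set H : ℕ → ℝ → ℝ≥0∞ :=
    fun i => Nat.casesOn i (Set.indicator {(k : ℝ)} fun _ => (1 : ℝ≥0∞)) fun _ => F with hH
  have hHmeas : ∀ i, Measurable (H i) := by
    intro i
    cases i with
    | zero => exact measurable_const.indicator (measurableSet_singleton _)
    | succ j => exact hF
  set G : ℕ → Ω → ℝ≥0∞ := fun i => H i ∘ poissonJumpFamily N ξ i with hG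
  have hGindep : iIndepFun G ℙ :=
    hindep.comp H hHmeas
  have hGmeas : ∀ i, Measurable (G i) := fun i => (hHmeas i).comp (hZmeas i)
  have hG0 : ∀ ω, G 0 ω = Set.indicator {ω' | N ω' = k} (fun _ => (1 : ℝ≥0∞)) ω := by
    intro ω
    by_cases h : N ω = k
    · simp [hG, hH, poissonJumpFamily, Set.indicator_apply, h]
    · have h' : (N ω : ℝ) ≠ (k : ℝ) := by exact_mod_cast h
      simp [hG, hH, poissonJumpFamily, Set.indicator_apply, h, h']
  have hpt2 : ∀ ω, Set.indicator {ω' | N ω' = k}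
      (fun ω' => ∏ j ∈ Finset.range k, F (ξ j ω')) ω
      = ∏ i ∈ Finset.range (k + 1), G i ω := by
    intro ω
    rw [Finset.prod_range_succ']
    have hsucc : ∀ j, G (j + 1) ω = F (ξ j ω) := fun j => rfl
    by_cases h : N ω = k
    · rw [Set.indicator_of_mem (show ω ∈ {ω' | N ω' = k} from h)]
      have hG0' : G 0 ω = 1 := by
        rw [hG0]
        exact Set.indicator_of_mem (show ω ∈ {ω' | N ω' = k} from h) _
      rw [hG0', mul_one]
      exact Finset.prod_congr rfl fun j _ => (hsucc j).symm
    · rw [Set.indicator_of_notMem (show ω ∉ {ω' | N ω' = k} from h)]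
      have hG0' : G 0 ω = 0 := by
        rw [hG0]
        exact Set.indicator_of_notMem (show ω ∉ {ω' | N ω' = k} from h) _
      rw [hG0', mul_zero]
  rw [lintegral_congr hpt2, aux_lintegral_prod_indep G hGmeas hGindep,
    Finset.prod_range_succ']
  have h0 : ∫⁻ ω, G 0 ω ∂ℙ = ℙ {ω | N ω = k} := by
    rw [lintegral_congr hG0, lintegral_indicator (hset k)]
    simp
  rw [h0, mul_comm]
  rfl

lemma aux_poisson_sum (δ : ℝ) (hδ : 0 ≤ δ) (m : ℝ) (hm : 0 ≤ m) :
    ∑' k : ℕ, ENNReal.ofReal (Real.exp (-δ) * δ ^ k / (Nat.factorial k))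
        * (ENNReal.ofReal m) ^ k
      = ENNReal.ofReal (Real.exp (δ * (m - 1))) := by
  have hterm : ∀ k : ℕ,
      ENNReal.ofReal (Real.exp (-δ) * δ ^ k / (Nat.factorial k)) * (ENNReal.ofReal m) ^ k
      = ENNReal.ofReal (Real.exp (-δ) * ((δ * m) ^ k / (Nat.factorial k))) := by
    intro k
    rw [← ENNReal.ofReal_pow hm, ← ENNReal.ofReal_mul (by positivity)]
    congr 1
    ring
  simp_rw [hterm]
  have hsum : HasSum (fun k : ℕ => Real.exp (-δ) * ((δ * m) ^ k / (Nat.factorial k)))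
      (Real.exp (-δ) * Real.exp (δ * m)) := by
    have h := NormedSpace.expSeries_div_hasSum_exp (δ * m)
    rw [← Real.exp_eq_exp_ℝ] at h
    exact h.mul_left _
  rw [← ENNReal.ofReal_tsum_of_nonneg (fun k => by positivity) hsum.summable,
    hsum.tsum_eq, ← Real.exp_add]
  congr 1
  ring

lemma aux_expectation (δ : ℝ) (hδ : 0 ≤ δ) (N : Ω → ℕ) (ξ : ℕ → Ω → ℝ)
    (hNmeas : Measurable N) (hξmeas : ∀ j, Measurable (ξ j))
    (hNpois : ∀ k : ℕ,
      ℙ {ω | N ω = k} = ENNReal.ofReal (Real.exp (-δ) * δ ^ k / (Nat.factorial k)))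
    (hident : ∀ j, Measure.map (ξ j) ℙ = Measure.map (ξ 0) ℙ)
    (hindep : iIndepFun
      (poissonJumpFamily N ξ) ℙ)
    (f : ℝ → ℝ) (hf : Measurable f)
    (hnn : ∀ᵐ ω ∂ℙ, 0 ≤ f (ξ 0 ω)) (hint : Integrable (fun ω => f (ξ 0 ω)) ℙ) :
    Integrable (fun ω => ∏ j ∈ Finset.range (N ω), f (ξ j ω)) ℙ ∧
    ∫ ω, ∏ j ∈ Finset.range (N ω), f (ξ j ω) ∂ℙ
      = Real.exp (δ * ((∫ ω, f (ξ 0 ω) ∂ℙ) - 1)) := by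
  set m := ∫ ω, f (ξ 0 ω) ∂ℙ with hm_def
  have hm : 0 ≤ m := integral_nonneg_of_ae hnn
  have hSmeas : MeasurableSet {x : ℝ | ¬ 0 ≤ f x} :=
    (measurableSet_le measurable_const hf).compl
  have hnnj : ∀ j, ∀ᵐ ω ∂ℙ, 0 ≤ f (ξ j ω) := by
    intro j
    rw [ae_iff] at hnn ⊢
    have e1 : {ω | ¬ 0 ≤ f (ξ j ω)} = ξ j ⁻¹' {x | ¬ 0 ≤ f x} := rfl
    have e0 : {ω | ¬ 0 ≤ f (ξ 0 ω)} = ξ 0 ⁻¹' {x | ¬ 0 ≤ f x} := rfl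
    rw [e1, ← Measure.map_apply (hξmeas j) hSmeas, hident j,
      Measure.map_apply (hξmeas 0) hSmeas, ← e0]
    exact hnn
  have hlint_j : ∀ j, ∫⁻ ω, ENNReal.ofReal (f (ξ j ω)) ∂ℙ = ENNReal.ofReal m := by
    intro j
    have hmof : Measurable fun x => ENNReal.ofReal (f x) :=
      ENNReal.measurable_ofReal.comp hf
    have h1 : ∫⁻ ω, ENNReal.ofReal (f (ξ j ω)) ∂ℙ
        = ∫⁻ x, ENNReal.ofReal (f x) ∂(Measure.map (ξ j) ℙ) :=
      (lintegral_map hmof (hξmeas j)).symm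
    rw [h1, hident j, lintegral_map hmof (hξmeas 0),
      ← ofReal_integral_eq_lintegral_ofReal hint hnn]
  have hcore := aux_core N ξ hNmeas hξmeas hindep
    (fun x => ENNReal.ofReal (f x)) (ENNReal.measurable_ofReal.comp hf)
  simp_rw [hlint_j, Finset.prod_const, Finset.card_range, hNpois] at hcore
  have hsum : ∫⁻ ω, ∏ j ∈ Finset.range (N ω), ENNReal.ofReal (f (ξ j ω)) ∂ℙ
      = ENNReal.ofReal (Real.exp (δ * (m - 1))) := by
    rw [hcore]
    exact aux_poisson_sum δ hδ m hm
  have hall : ∀ᵐ ω ∂ℙ, ∀ j, 0 ≤ f (ξ j ω) := (ae_all_iff).2 hnnj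
  have haeq : (fun ω => ∏ j ∈ Finset.range (N ω), ENNReal.ofReal (f (ξ j ω)))
      =ᵐ[ℙ] fun ω => ENNReal.ofReal (∏ j ∈ Finset.range (N ω), f (ξ j ω)) := by
    filter_upwards [hall] with ω hω
    exact (ENNReal.ofReal_prod_of_nonneg fun j _ => hω j).symm
  have hPnn : ∀ᵐ ω ∂ℙ, 0 ≤ ∏ j ∈ Finset.range (N ω), f (ξ j ω) := by
    filter_upwards [hall] with ω hω
    exact Finset.prod_nonneg fun j _ => hω j
  have hPmeas : Measurable (fun ω => ∏ j ∈ Finset.range (N ω), f (ξ j ω)) := by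
    have he : (fun ω => ∏ j ∈ Finset.range (N ω), f (ξ j ω))
        = (fun p : Ω × ℕ => ∏ j ∈ Finset.range p.2, f (ξ j p.1))
          ∘ (fun ω => (ω, N ω)) := rfl
    have hpm : ∀ n : ℕ, Measurable fun ω => ∏ j ∈ Finset.range n, f (ξ j ω) :=
      fun n => Finset.measurable_prod _ fun j _ => hf.comp (hξmeas j)
    rw [he]
    exact (measurable_from_prod_countable_left fun n => hpm n).comp
      (measurable_id.prodMk hNmeas)
  have hlt : ∫⁻ ω, ENNReal.ofReal (∏ j ∈ Finset.range (N ω), f (ξ j ω)) ∂ℙ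
      = ENNReal.ofReal (Real.exp (δ * (m - 1))) := by
    rw [← lintegral_congr_ae haeq, hsum]
  have hint2 : Integrable (fun ω => ∏ j ∈ Finset.range (N ω), f (ξ j ω)) ℙ := by
    refine ⟨hPmeas.aestronglyMeasurable, ?_⟩
    rw [hasFiniteIntegral_iff_ofReal hPnn, hlt]
    exact ENNReal.ofReal_lt_top
  refine ⟨hint2, ?_⟩
  rw [integral_eq_lintegral_of_nonneg_ae hPnn hPmeas.aestronglyMeasurable, hlt,
    ENNReal.toReal_ofReal (Real.exp_nonneg _)]

end Aux

/- STATEMENT 10: Let N be Poisson(δ), (ξ_j) i.i.d. with ξ₁ > −1 a.s. and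
   E[ξ₁²] < ∞, all mutually independent.  Then
   E[ (∏_{j=1}^{N} (1+ξ_j) − 1)² ] = exp(δ E[2ξ₁+ξ₁²]) − 2 exp(δ E[ξ₁]) + 1. -/
theorem compound_poisson_product_centered_square
    {Ω : Type*} [MeasureSpace Ω] [IsProbabilityMeasure (ℙ : Measure Ω)]
    (δ : ℝ) (hδ : 0 ≤ δ) (N : Ω → ℕ) (ξ : ℕ → Ω → ℝ)
    (hNmeas : Measurable N) (hξmeas : ∀ j, Measurable (ξ j))
    (hNpois : ∀ k : ℕ,
      ℙ {ω | N ω = k} = ENNReal.ofReal (Real.exp (-δ) * δ ^ k / (Nat.factorial k)))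
    (hident : ∀ j, Measure.map (ξ j) ℙ = Measure.map (ξ 0) ℙ)
    (hindep : iIndepFun
      (poissonJumpFamily N ξ) ℙ)
    (hpos : ∀ᵐ ω ∂ℙ, -1 < ξ 0 ω)
    (hsq : Integrable (fun ω => (ξ 0 ω) ^ 2) ℙ) :
    ∫ ω, ((∏ j ∈ Finset.range (N ω), (1 + ξ j ω)) - 1) ^ 2 ∂ℙ
      = Real.exp (δ * ∫ ω, (2 * ξ 0 ω + (ξ 0 ω) ^ 2) ∂ℙ)
        - 2 * Real.exp (δ * ∫ ω, ξ 0 ω ∂ℙ) + 1 := by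
  have hξ0int : Integrable (ξ 0) ℙ := by
    refine Integrable.mono' (hsq.add (integrable_const 1))
      (hξmeas 0).aestronglyMeasurable (ae_of_all _ fun ω => ?_)
    have h1 : |ξ 0 ω| ≤ (ξ 0 ω) ^ 2 + 1 := by
      nlinarith [sq_nonneg (|ξ 0 ω| - 1), sq_abs (ξ 0 ω), abs_nonneg (ξ 0 ω)]
    simpa using h1
  -- first moment
  have hf1meas : Measurable (fun x : ℝ => 1 + x) := measurable_const.add measurable_id
  have hf1nn : ∀ᵐ ω ∂ℙ, 0 ≤ 1 + ξ 0 ω := by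
    filter_upwards [hpos] with ω hω; linarith
  have hf1int : Integrable (fun ω => 1 + ξ 0 ω) ℙ := (integrable_const 1).add hξ0int
  obtain ⟨hP1int, hP1⟩ := aux_expectation δ hδ N ξ hNmeas hξmeas hNpois hident hindep
    (fun x => 1 + x) hf1meas hf1nn hf1int
  have hI1 : ∫ ω, (1 + ξ 0 ω) ∂ℙ = 1 + ∫ ω, ξ 0 ω ∂ℙ := by
    rw [integral_add (integrable_const 1) hξ0int, integral_const]
    simp
  rw [hI1] at hP1
  simp only [add_sub_cancel_left] at hP1
  -- second moment
  have hf2meas : Measurable (fun x : ℝ => (1 + x) ^ 2) := by measurability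
  have hf2nn : ∀ᵐ ω ∂ℙ, 0 ≤ (1 + ξ 0 ω) ^ 2 := ae_of_all _ fun ω => sq_nonneg _
  have hmixint : Integrable (fun ω => 2 * ξ 0 ω + (ξ 0 ω) ^ 2) ℙ :=
    (hξ0int.const_mul 2).add hsq
  have hf2int : Integrable (fun ω => (1 + ξ 0 ω) ^ 2) ℙ := by
    have h : (fun ω => (1 + ξ 0 ω) ^ 2)
        = fun ω => 1 + (2 * ξ 0 ω + (ξ 0 ω) ^ 2) := by
      funext ω; ring
    rw [h]
    exact (integrable_const 1).add hmixint
  obtain ⟨hP2int, hP2⟩ := aux_expectation δ hδ N ξ hNmeas hξmeas hNpois hident hindep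
    (fun x => (1 + x) ^ 2) hf2meas hf2nn hf2int
  have hI2 : ∫ ω, (1 + ξ 0 ω) ^ 2 ∂ℙ = 1 + ∫ ω, (2 * ξ 0 ω + (ξ 0 ω) ^ 2) ∂ℙ := by
    have h : (fun ω => (1 + ξ 0 ω) ^ 2)
        = fun ω => 1 + (2 * ξ 0 ω + (ξ 0 ω) ^ 2) := by
      funext ω; ring
    rw [h, integral_add (integrable_const 1) hmixint, integral_const]
    simp
  rw [hI2] at hP2
  simp only [add_sub_cancel_left] at hP2
  -- rewrite product of squares as square of product
  have hsqP : (fun ω => ∏ j ∈ Finset.range (N ω), (1 + ξ j ω) ^ 2)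
      = fun ω => (∏ j ∈ Finset.range (N ω), (1 + ξ j ω)) ^ 2 := by
    funext ω; rw [Finset.prod_pow]
  rw [hsqP] at hP2int hP2
  set P : Ω → ℝ := fun ω => ∏ j ∈ Finset.range (N ω), (1 + ξ j ω) with hPdef
  -- expand the square
  have hexp : (fun ω => (P ω - 1) ^ 2) = fun ω => (P ω ^ 2 - 2 * P ω) + 1 := by
    funext ω; ring
  calc ∫ ω, (P ω - 1) ^ 2 ∂ℙ
      = ∫ ω, ((P ω ^ 2 - 2 * P ω) + 1) ∂ℙ := by rw [hexp]
    _ = (∫ ω, (P ω ^ 2 - 2 * P ω) ∂ℙ) + ∫ ω, (1 : ℝ) ∂ℙ :=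
        integral_add (hP2int.sub (hP1int.const_mul 2)) (integrable_const 1)
    _ = (∫ ω, P ω ^ 2 ∂ℙ) - (∫ ω, 2 * P ω ∂ℙ) + 1 := by
        rw [integral_sub hP2int (hP1int.const_mul 2), integral_const]
        simp
        rfl
    _ = Real.exp (δ * ∫ ω, (2 * ξ 0 ω + (ξ 0 ω) ^ 2) ∂ℙ)
        - 2 * Real.exp (δ * ∫ ω, ξ 0 ω ∂ℙ) + 1 := by
        rw [integral_const_mul, hP1, hP2]
end
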